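/- Let n ≥ 1 and let 1 ≤ z_1 < z_2 < ⋯ < z_m ≤ n. Then there exists a continuous map W : [0,1] → Mₙ(ℂ) such that W(ξ) is unitary for every ξ ∈ [0,1] and: (a) W(0) = Iₙ; (b) for every T ∈ Mₙ(ℂ) having zero crosses at all of the indices z_1,…,z_m, the matrix W(1)·T·W(1)* has zero crosses at indices 1, 2, …, m, and 𝔯(W(ξ)·T·W(ξ)*) ≤ 𝔯(T) + 2 for every ξ ∈ [0,1]; (c) for every b ≥ 1 and every n×b complex matrix T whose rows z_1,…,z_m consist entirely of zeros, the first m rows of W(1)·T consist entirely of zeros, and for every ξ ∈ [0,1], 𝔯(topRight(W(ξ)·T)) ≤ 𝔯(topRight(T)); (d) for every b ≥ 1 and every b×n complex matrix T whose columns z_1,…,z_m consist entirely of zeros, the first m columns of T·W(1)* consist entirely of zeros, and for every ξ ∈ [0,1], 𝔯(botLeft(T·W(ξ)*)) ≤ 𝔯(botLeft(T)). -/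

import Mathlib

/-- `D` has a zero cross at index `k`: every entry in the `k`-th row and every entry
in the `k`-th column of `D` is `0`. -/
def hasZeroCross {n : ℕ} (D : Matrix (Fin n) (Fin n) ℂ) (k : Fin n) : Prop :=
  (∀ q : Fin n, D k q = 0) ∧ (∀ p : Fin n, D p k = 0)

/-- The bandwidth `𝔯(D)` of a matrix: the least `m : ℕ` such that `D p q = 0`
whenever `|p - q| ≥ m`. -/
noncomputable def bandwidth {n : ℕ} (D : Matrix (Fin n) (Fin n) ℂ) : ℕ :=
  sInf {m : ℕ | ∀ p q : Fin n, m ≤ Nat.dist (p : ℕ) (q : ℕ) → D p q = 0}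

/-- The `(n+b) × (n+b)` matrix whose top-right `n × b` block is `S` and whose other
three blocks are zero. -/
def topRight {n b : ℕ} (S : Matrix (Fin n) (Fin b) ℂ) :
    Matrix (Fin (n + b)) (Fin (n + b)) ℂ :=
  Matrix.of fun p q =>
    if h : (p : ℕ) < n ∧ n ≤ (q : ℕ) then
      S ⟨(p : ℕ), h.1⟩ ⟨(q : ℕ) - n, by have := q.2; omega⟩
    else 0

/-- The `(n+b) × (n+b)` matrix whose bottom-left `b × n` block is `S` and whose other
three blocks are zero. -/
def botLeft {n b : ℕ} (S : Matrix (Fin b) (Fin n) ℂ) :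
    Matrix (Fin (n + b)) (Fin (n + b)) ℂ :=
  Matrix.of fun p q =>
    if h : n ≤ (p : ℕ) ∧ (q : ℕ) < n then
      S ⟨(p : ℕ) - n, by have := p.2; omega⟩ ⟨(q : ℕ), h.2⟩
    else 0

namespace S12
open Matrix Finset

variable {n : ℕ}

noncomputable def Rot (a b : Fin n) (θ : ℝ) : Matrix (Fin n) (Fin n) ℂ :=
  Matrix.of fun p q =>
    if p = a ∧ q = a then (Real.cos θ : ℂ)
    else if p = a ∧ q = b then (-(Real.sin θ) : ℂ)
    else if p = b ∧ q = a then (Real.sin θ : ℂ)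
    else if p = b ∧ q = b then (Real.cos θ : ℂ)
    else if p = q then 1 else 0

lemma rot_row_a {a b : Fin n} (hab : a ≠ b) (θ : ℝ) (q : Fin n) :
    Rot a b θ a q = if q = a then (Real.cos θ : ℂ) else if q = b then (-(Real.sin θ) : ℂ) else 0 := by
  by_cases h1 : q = a
  · simp [Rot, h1]
  · by_cases h2 : q = b
    · simp [Rot, h1, h2, hab, Ne.symm hab]
    · have h1' : ¬ (a = q) := fun h => h1 h.symm
      simp [Rot, h1, h2, hab, Ne.symm hab, h1']

lemma rot_row_b {a b : Fin n} (hab : a ≠ b) (θ : ℝ) (q : Fin n) :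
    Rot a b θ b q = if q = a then (Real.sin θ : ℂ) else if q = b then (Real.cos θ : ℂ) else 0 := by
  by_cases h1 : q = a
  · simp [Rot, h1, hab, Ne.symm hab]
  · by_cases h2 : q = b
    · simp [Rot, h1, h2, hab, Ne.symm hab]
    · have h2' : ¬ (b = q) := fun h => h2 h.symm
      simp [Rot, h1, h2, hab, Ne.symm hab, h2']

lemma rot_row_p {a b : Fin n} (θ : ℝ) {p : Fin n} (h1 : p ≠ a) (h2 : p ≠ b) (q : Fin n) :
    Rot a b θ p q = if q = p then (1:ℂ) else 0 := by
  by_cases h3 : q = p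
  · simp [Rot, h1, h2, h3]
  · have h3' : ¬ (p = q) := fun h => h3 h.symm
    simp [Rot, h1, h2, h3, h3']

lemma rot_col_a {a b : Fin n} (hab : a ≠ b) (θ : ℝ) (p : Fin n) :
    Rot a b θ p a = if p = a then (Real.cos θ : ℂ) else if p = b then (Real.sin θ : ℂ) else 0 := by
  by_cases h1 : p = a
  · rw [h1, rot_row_a hab]; simp
  · by_cases h2 : p = b
    · rw [h2, rot_row_b hab]; simp [h1, hab, Ne.symm hab]
    · rw [rot_row_p θ h1 h2]
      have h1' : ¬ (a = p) := fun h => h1 h.symm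
      simp [h1, h2, h1']

lemma rot_col_b {a b : Fin n} (hab : a ≠ b) (θ : ℝ) (p : Fin n) :
    Rot a b θ p b = if p = a then (-(Real.sin θ) : ℂ) else if p = b then (Real.cos θ : ℂ) else 0 := by
  by_cases h1 : p = a
  · rw [h1, rot_row_a hab]; simp [hab, Ne.symm hab]
  · by_cases h2 : p = b
    · rw [h2, rot_row_b hab]; simp [h1, hab, Ne.symm hab]
    · rw [rot_row_p θ h1 h2]
      have h2' : ¬ (b = p) := fun h => h2 h.symm
      simp [h1, h2, h2']

lemma rot_col_q {a b : Fin n} (hab : a ≠ b) (θ : ℝ) {q : Fin n} (h1 : q ≠ a) (h2 : q ≠ b) (p : Fin n) :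
    Rot a b θ p q = if p = q then (1:ℂ) else 0 := by
  by_cases h3 : p = a
  · have h1' : ¬ (a = q) := fun h => h1 h.symm
    rw [h3, rot_row_a hab]; simp [h1, h2, h1', Ne.symm h1, Ne.symm h2]
  · by_cases h4 : p = b
    · have h2' : ¬ (b = q) := fun h => h2 h.symm
      rw [h4, rot_row_b hab]; simp [h1, h2, h2', Ne.symm h1, Ne.symm h2]
    · rw [rot_row_p θ h3 h4]; simp [eq_comm]

private lemma sum2 {B : ℕ} (M : Matrix (Fin n) (Fin B) ℂ) (a b : Fin n) (hab : a ≠ b)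
    (x y : ℂ) (q : Fin B) :
    (∑ r : Fin n, (if r = a then x else if r = b then y else 0) * M r q)
      = x * M a q + y * M b q := by
  have : ∀ r : Fin n, (if r = a then x else if r = b then y else 0) * M r q
      = (if r = a then x * M a q else 0) + (if r = b then y * M b q else 0) := by
    intro r
    by_cases h1 : r = a
    · simp [h1, hab, Ne.symm hab]
    · by_cases h2 : r = b <;> simp [h1, h2, hab, Ne.symm hab]
  rw [Finset.sum_congr rfl fun r _ => this r, Finset.sum_add_distrib]
  simp

private lemma sum1 {B : ℕ} (M : Matrix (Fin n) (Fin B) ℂ) (p : Fin n) (q : Fin B) :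
    (∑ r : Fin n, (if r = p then (1:ℂ) else 0) * M r q) = M p q := by
  have : ∀ r : Fin n, (if r = p then (1:ℂ) else 0) * M r q
      = (if r = p then M p q else 0) := by
    intro r; by_cases h1 : r = p <;> simp [h1]
  rw [Finset.sum_congr rfl fun r _ => this r]
  simp

private lemma sum2r {B : ℕ} (M : Matrix (Fin B) (Fin n) ℂ) (a b : Fin n) (hab : a ≠ b)
    (x y : ℂ) (p : Fin B) :
    (∑ r : Fin n, M p r * (if r = a then x else if r = b then y else 0))
      = x * M p a + y * M p b := by
  have : ∀ r : Fin n, M p r * (if r = a then x else if r = b then y else 0)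
      = (if r = a then x * M p a else 0) + (if r = b then y * M p b else 0) := by
    intro r
    by_cases h1 : r = a
    · simp [h1, hab, Ne.symm hab]; ring
    · by_cases h2 : r = b
      · simp [h1, h2, hab, Ne.symm hab]; ring
      · simp [h1, h2]
  rw [Finset.sum_congr rfl fun r _ => this r, Finset.sum_add_distrib]
  simp

private lemma sum1r {B : ℕ} (M : Matrix (Fin B) (Fin n) ℂ) (p : Fin B) (q : Fin n) :
    (∑ r : Fin n, M p r * (if r = q then (1:ℂ) else 0)) = M p q := by
  have : ∀ r : Fin n, M p r * (if r = q then (1:ℂ) else 0)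
      = (if r = q then M p q else 0) := by
    intro r; by_cases h1 : r = q <;> simp [h1]
  rw [Finset.sum_congr rfl fun r _ => this r]
  simp

lemma rot_zero (a b : Fin n) (hab : a ≠ b) : Rot a b 0 = 1 := by
  ext p q
  by_cases h1 : p = a <;> by_cases h2 : q = a <;> by_cases h3 : p = b <;>
    by_cases h4 : q = b <;>
    simp_all [Rot, Matrix.one_apply, hab, Ne.symm hab]

lemma rot_mul_apply {a b : Fin n} (hab : a ≠ b) (θ : ℝ) {B : ℕ}
    (M : Matrix (Fin n) (Fin B) ℂ) (p : Fin n) (q : Fin B) :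
    (Rot a b θ * M) p q =
      if p = a then Real.cos θ * M a q - Real.sin θ * M b q
      else if p = b then Real.sin θ * M a q + Real.cos θ * M b q
      else M p q := by
  rw [Matrix.mul_apply]
  by_cases hpa : p = a
  · rw [hpa]
    rw [Finset.sum_congr rfl fun r _ => by rw [rot_row_a hab θ r],
      sum2 M a b hab _ _ q]
    simp only [if_pos rfl]
    push_cast; ring
  · by_cases hpb : p = b
    · rw [hpb]
      rw [Finset.sum_congr rfl fun r _ => by rw [rot_row_b hab θ r],
        sum2 M a b hab _ _ q]
      rw [if_neg (by rw [hpb] at hpa; exact hpa), if_pos rfl]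
      all_goals (push_cast; ring)
    · rw [Finset.sum_congr rfl fun r _ => by rw [rot_row_p θ hpa hpb r]]
      rw [show (∑ r : Fin n, (if r = p then (1:ℂ) else 0) * M r q) = M p q from sum1 M p q]
      rw [if_neg hpa, if_neg hpb]

lemma star_rot {a b : Fin n} (hab : a ≠ b) (θ : ℝ) :
    star (Rot a b θ) = Rot a b (-θ) := by
  ext r q
  rw [Matrix.star_apply]
  by_cases h1 : q = a
  · rw [h1, rot_row_a hab θ r, rot_col_a hab (-θ) r]
    by_cases h2 : r = a
    · simp [h2, Complex.conj_ofReal, Real.cos_neg, -Complex.ofReal_cos]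
    · by_cases h3 : r = b <;>
        simp [h2, h3, hab, Ne.symm hab, Complex.conj_ofReal, Real.sin_neg, -Complex.ofReal_sin]
  · by_cases h2 : q = b
    · rw [h2, rot_row_b hab θ r, rot_col_b hab (-θ) r]
      by_cases h3 : r = a
      · simp [h3, hab, Ne.symm hab, Complex.conj_ofReal, Real.sin_neg, -Complex.ofReal_sin]
      · by_cases h4 : r = b <;>
          simp [h3, h4, hab, Ne.symm hab, Complex.conj_ofReal, Real.cos_neg, -Complex.ofReal_cos]
    · rw [rot_row_p θ (p := q) h1 h2 r, rot_col_q hab (-θ) h1 h2 r]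
      by_cases h3 : r = q
      · simp [h3]
      · have h3' : ¬ (q = r) := fun h => h3 h.symm
        simp [h3, h3']

lemma mul_rotstar_apply {a b : Fin n} (hab : a ≠ b) (θ : ℝ) {B : ℕ}
    (M : Matrix (Fin B) (Fin n) ℂ) (p : Fin B) (q : Fin n) :
    (M * star (Rot a b θ)) p q =
      if q = a then Real.cos θ * M p a - Real.sin θ * M p b
      else if q = b then Real.sin θ * M p a + Real.cos θ * M p b
      else M p q := by
  rw [star_rot hab, Matrix.mul_apply]
  by_cases hqa : q = a
  · rw [Finset.sum_congr rfl fun r _ => by rw [hqa, rot_col_a hab (-θ) r],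
      sum2r M a b hab _ _ p, if_pos hqa]
    rw [Real.cos_neg, Real.sin_neg]
    push_cast; ring
  · by_cases hqb : q = b
    · rw [Finset.sum_congr rfl fun r _ => by rw [hqb, rot_col_b hab (-θ) r],
        sum2r M a b hab _ _ p, if_neg hqa, if_pos hqb]
      rw [Real.cos_neg, Real.sin_neg]
      push_cast; ring
    · rw [Finset.sum_congr rfl fun r _ => by rw [rot_col_q hab (-θ) hqa hqb r],
        sum1r M p q, if_neg hqa, if_neg hqb]

lemma rot_mul_rot {a b : Fin n} (hab : a ≠ b) (θ φ : ℝ) :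
    Rot a b θ * Rot a b φ = Rot a b (θ + φ) := by
  ext p q
  rw [rot_mul_apply hab]
  by_cases hpa : p = a
  · rw [if_pos hpa, hpa, rot_row_a hab (θ + φ) q, rot_row_a hab φ q, rot_row_b hab φ q]
    by_cases h1 : q = a
    · rw [if_pos h1, if_pos h1, if_pos h1]
      rw [Real.cos_add]; push_cast; ring
    · rw [if_neg h1, if_neg h1, if_neg h1]
      by_cases h2 : q = b
      · rw [if_pos h2, if_pos h2, if_pos h2]
        rw [Real.sin_add]; push_cast; ring
      · rw [if_neg h2, if_neg h2, if_neg h2]; ring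
  · rw [if_neg hpa]
    by_cases hpb : p = b
    · rw [if_pos hpb, hpb, rot_row_b hab (θ + φ) q, rot_row_a hab φ q, rot_row_b hab φ q]
      by_cases h1 : q = a
      · rw [if_pos h1, if_pos h1, if_pos h1]
        rw [Real.sin_add]; push_cast; ring
      · rw [if_neg h1, if_neg h1, if_neg h1]
        by_cases h2 : q = b
        · rw [if_pos h2, if_pos h2, if_pos h2]
          rw [Real.cos_add]; push_cast; ring
        · rw [if_neg h2, if_neg h2, if_neg h2]; ring
    · rw [if_neg hpb, rot_row_p φ hpa hpb q, rot_row_p (θ + φ) hpa hpb q]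

lemma rot_unitary {a b : Fin n} (hab : a ≠ b) (θ : ℝ) :
    Rot a b θ ∈ Matrix.unitaryGroup (Fin n) ℂ := by
  rw [Matrix.mem_unitaryGroup_iff]
  rw [star_rot hab, rot_mul_rot hab, add_neg_cancel, rot_zero _ _ hab]


/-! ### Monomial matrices -/

def IsMono (F : Equiv.Perm ℕ) (ε : ℕ → ℂ) (W : Matrix (Fin n) (Fin n) ℂ) : Prop :=
  (∀ x, n ≤ x → F x = x) ∧
  ∀ p q : Fin n, W p q = ε q * (if (p:ℕ) = F (q:ℕ) then 1 else 0)

namespace IsMono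

variable {F : Equiv.Perm ℕ} {ε : ℕ → ℂ} {W : Matrix (Fin n) (Fin n) ℂ}

lemma lt (h : IsMono F ε W) {x : ℕ} (hx : x < n) : F x < n := by
  by_contra h'
  push_neg at h'
  have h2 := h.1 _ h'
  have := F.injective h2
  omega

lemma symm_fix (h : IsMono F ε W) {x : ℕ} (hx : n ≤ x) : F.symm x = x := by
  conv_lhs => rw [← h.1 x hx]
  exact F.symm_apply_apply x

lemma symm_lt (h : IsMono F ε W) {x : ℕ} (hx : x < n) : F.symm x < n := by
  by_contra h'
  push_neg at h'
  have h2 := h.1 _ h'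
  have h3 : F (F.symm x) = x := F.apply_symm_apply x
  omega

lemma mul_left (h : IsMono F ε W) {B : ℕ} (T : Matrix (Fin n) (Fin B) ℂ)
    (p : Fin n) (q : Fin B) :
    (W * T) p q = ε (F.symm (p:ℕ)) * T ⟨F.symm (p:ℕ), h.symm_lt p.2⟩ q := by
  rw [Matrix.mul_apply]
  rw [Finset.sum_eq_single (⟨F.symm (p:ℕ), h.symm_lt p.2⟩ : Fin n)]
  · rw [h.2]
    simp [Equiv.apply_symm_apply]
  · intro r _ hr
    rw [h.2]
    have : ¬ ((p:ℕ) = F (r:ℕ)) := by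
      intro he
      apply hr
      have : F.symm (p:ℕ) = (r:ℕ) := by rw [he, Equiv.symm_apply_apply]
      exact Fin.ext (by rw [← this])
    simp [this]
  · intro hmem; exact absurd (Finset.mem_univ _) hmem

lemma mul_star_right (h : IsMono F ε W) {B : ℕ} (T : Matrix (Fin B) (Fin n) ℂ)
    (p : Fin B) (q : Fin n) :
    (T * star W) p q
      = star (ε (F.symm (q:ℕ))) * T p ⟨F.symm (q:ℕ), h.symm_lt q.2⟩ := by
  rw [Matrix.mul_apply]
  rw [Finset.sum_eq_single (⟨F.symm (q:ℕ), h.symm_lt q.2⟩ : Fin n)]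
  · rw [Matrix.star_apply, h.2]
    simp [Equiv.apply_symm_apply]
    ring
  · intro r _ hr
    rw [Matrix.star_apply, h.2]
    have : ¬ ((q:ℕ) = F (r:ℕ)) := by
      intro he
      apply hr
      have : F.symm (q:ℕ) = (r:ℕ) := by rw [he, Equiv.symm_apply_apply]
      exact Fin.ext (by rw [← this])
    simp [this]
  · intro hmem; exact absurd (Finset.mem_univ _) hmem

lemma conj (h : IsMono F ε W) (T : Matrix (Fin n) (Fin n) ℂ) (p q : Fin n) :
    (W * T * star W) p q
      = ε (F.symm (p:ℕ)) * star (ε (F.symm (q:ℕ)))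
        * T ⟨F.symm (p:ℕ), h.symm_lt p.2⟩ ⟨F.symm (q:ℕ), h.symm_lt q.2⟩ := by
  rw [h.mul_star_right (W * T) p q,
    h.mul_left T p ⟨F.symm (q:ℕ), h.symm_lt q.2⟩]
  ring

end IsMono

lemma mono_one : IsMono (Equiv.refl ℕ) (fun _ => 1) (1 : Matrix (Fin n) (Fin n) ℂ) := by
  refine ⟨fun x _ => rfl, fun p q => ?_⟩
  rw [Matrix.one_apply]
  by_cases h : p = q
  · simp [h]
  · have : ¬ ((p:ℕ) = (q:ℕ)) := fun he => h (Fin.ext he)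
    simp [h, this]

lemma mono_mul {G F : Equiv.Perm ℕ} {δ ε : ℕ → ℂ}
    {V W : Matrix (Fin n) (Fin n) ℂ}
    (hV : IsMono G δ V) (hW : IsMono F ε W) :
    IsMono (F.trans G) (fun q => ε q * δ (F q)) (V * W) := by
  refine ⟨fun x hx => ?_, fun p q => ?_⟩
  · simp [Equiv.trans_apply, hW.1 x hx, hV.1 x hx]
  · rw [Matrix.mul_apply]
    rw [Finset.sum_eq_single (⟨F (q:ℕ), hW.lt q.2⟩ : Fin n)]
    · rw [hV.2, hW.2]
      simp [Equiv.trans_apply]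
      by_cases hc : (p:ℕ) = G (F (q:ℕ)) <;> simp [hc, mul_comm]
    · intro r _ hr
      rw [hV.2, hW.2]
      have : ¬ ((r:ℕ) = F (q:ℕ)) := fun he => hr (Fin.ext he)
      simp [this]
    · intro hmem; exact absurd (Finset.mem_univ _) hmem

lemma mono_rot_halfpi (c : ℕ) (hc : c + 1 < n) :
    IsMono (Equiv.swap c (c+1)) (fun q => if q = c + 1 then -1 else 1)
      (Rot (⟨c, by omega⟩ : Fin n) ⟨c+1, hc⟩ (Real.pi/2)) := by
  have hab : (⟨c, by omega⟩ : Fin n) ≠ ⟨c+1, hc⟩ := by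
    intro h; rw [Fin.mk.injEq] at h; omega
  constructor
  · intro x hx
    apply Equiv.swap_apply_of_ne_of_ne <;> omega
  · intro p q
    by_cases hq1 : (q:ℕ) = c
    · have hq : q = ⟨c, by omega⟩ := Fin.ext hq1
      rw [hq, rot_col_a hab]
      simp only [Equiv.swap_apply_left, hq1]
      by_cases hp1 : (p:ℕ) = c + 1
      · have hp : p = ⟨c+1, hc⟩ := Fin.ext hp1
        simp [hp, hab, Ne.symm hab, hp1, hq1]
      · have hp' : p ≠ (⟨c+1, hc⟩ : Fin n) := fun h => hp1 (by rw [h])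
        by_cases hp2 : p = ⟨c, by omega⟩
        · simp [hp2, hp1, hq1]
        · simp [hp2, hp', hp1, hq1]
    · by_cases hq2 : (q:ℕ) = c + 1
      · have hq : q = ⟨c+1, hc⟩ := Fin.ext hq2
        rw [hq, rot_col_b hab]
        simp only [hq2, Equiv.swap_apply_right]
        by_cases hp1 : (p:ℕ) = c
        · have hp : p = ⟨c, by omega⟩ := Fin.ext hp1
          simp [hp, hp1]
        · have hp' : p ≠ (⟨c, by omega⟩ : Fin n) := fun h => hp1 (by rw [h])
          by_cases hp2 : p = ⟨c+1, hc⟩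
          · simp [hp2, hp', hp1]
          · simp [hp2, hp', hp1]
      · have hq1' : q ≠ (⟨c, by omega⟩ : Fin n) := fun h => hq1 (by rw [h])
        have hq2' : q ≠ (⟨c+1, hc⟩ : Fin n) := fun h => hq2 (by rw [h])
        rw [rot_col_q hab _ hq1' hq2']
        rw [Equiv.swap_apply_of_ne_of_ne hq1 hq2]
        by_cases hp : p = q
        · simp [hp, hq2]
        · have : ¬ ((p:ℕ) = (q:ℕ)) := fun he => hp (Fin.ext he)
          simp [hp, this, hq2]

/-! ### Bandwidth -/

lemma bandwidth_spec {N : ℕ} (D : Matrix (Fin N) (Fin N) ℂ) (p q : Fin N)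
    (h : bandwidth D ≤ Nat.dist (p:ℕ) (q:ℕ)) : D p q = 0 := by
  have hne : {m : ℕ | ∀ p q : Fin N, m ≤ Nat.dist (p:ℕ) (q:ℕ) → D p q = 0}.Nonempty := by
    refine ⟨N, fun p q hle => ?_⟩
    have := p.2; have := q.2
    have : Nat.dist (p:ℕ) (q:ℕ) < N := by
      simp [Nat.dist]; omega
    omega
  exact Nat.sInf_mem hne p q h

lemma bandwidth_le {N : ℕ} (D : Matrix (Fin N) (Fin N) ℂ) (r : ℕ)
    (h : ∀ p q : Fin N, r ≤ Nat.dist (p:ℕ) (q:ℕ) → D p q = 0) : bandwidth D ≤ r :=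
  Nat.sInf_le (by exact h)


/-! ### Combinatorics of the bubble-sort of crosses -/

section Comb

variable (y : ℕ → ℕ) (m : ℕ)

/-- number of crosses among the first `k` that lie strictly below row `j`. -/
def cntk (k j : ℕ) : ℕ := ((Finset.range k).filter fun i => y i ≤ j).card

/-- `j` is a cross row. -/
def Cross (j : ℕ) : Prop := ∃ i < m, y i = j + 1

open scoped Classical in
/-- the position of original row `j` in the state where crosses `0,…,k-1` have been
moved to the top, and cross `k` has been moved up to position `p`. -/
noncomputable def fml (k p j : ℕ) : ℕ :=
  if Cross y m j then
    (if cntk y m j < k then cntk y m j else if cntk y m j = k then p else j)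
  else (j + (k - cntk y k j)) + (if k < m ∧ p ≤ j + (k - cntk y k j) ∧ j + 1 < y k then 1 else 0)

variable {y m}

lemma cntk_le (k j : ℕ) : cntk y k j ≤ k :=
  le_trans (Finset.card_filter_le _ _) (by simp)

lemma cntk_mono (k : ℕ) {j j' : ℕ} (h : j ≤ j') : cntk y k j ≤ cntk y k j' := by
  apply Finset.card_le_card
  intro i hi
  simp only [Finset.mem_filter, Finset.mem_range] at *
  exact ⟨hi.1, le_trans hi.2 h⟩

lemma cntk_cross (hy : StrictMono y) {i j : ℕ} (hij : y i = j + 1) (k : ℕ) :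
    cntk y k j = min k i := by
  have he : ((Finset.range k).filter fun i' => y i' ≤ j) = Finset.range (min k i) := by
    ext i'
    simp only [Finset.mem_filter, Finset.mem_range, lt_min_iff]
    constructor
    · rintro ⟨h1, h2⟩
      refine ⟨h1, ?_⟩
      rw [← hy.lt_iff_lt]
      omega
    · rintro ⟨h1, h2⟩
      refine ⟨h1, ?_⟩
      have := hy.lt_iff_lt.mpr h2
      omega
  rw [cntk, he, Finset.card_range]

lemma card_between (hy : StrictMono y) (k r s : ℕ) :
    (((Finset.range k).filter fun i => r ≤ y i ∧ y i ≤ s).card) ≤ s + 1 - r := by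
  have h := Finset.card_le_card_of_injOn
    (s := (Finset.range k).filter fun i => r ≤ y i ∧ y i ≤ s)
    (t := Finset.Icc r s) y
    (fun a ha => Finset.mem_Icc.mpr (Finset.mem_filter.mp ha).2)
    (hy.injective.injOn)
  rw [Nat.card_Icc] at h
  exact h

lemma cntk_diff (hy : StrictMono y) {k j j' : ℕ} (hk : k ≤ m)
    (hnc : ¬ Cross y m j) (hjj : j < j') :
    cntk y k j' ≤ cntk y k j + (j' - (j + 1)) := by
  classical
  have hsub : ((Finset.range k).filter fun i => y i ≤ j')
      ⊆ ((Finset.range k).filter fun i => y i ≤ j)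
        ∪ ((Finset.range k).filter fun i => j + 2 ≤ y i ∧ y i ≤ j') := by
    intro i hi
    simp only [Finset.mem_filter, Finset.mem_union, Finset.mem_range] at *
    rcases hi with ⟨h1, h2⟩
    by_cases h3 : y i ≤ j
    · exact Or.inl ⟨h1, h3⟩
    · refine Or.inr ⟨h1, ?_, h2⟩
      have : y i ≠ j + 1 := fun he => hnc ⟨i, by omega, he⟩
      omega
  have h2 := Finset.card_union_le
    ((Finset.range k).filter fun i => y i ≤ j)
    ((Finset.range k).filter fun i => j + 2 ≤ y i ∧ y i ≤ j')
  have h3 := card_between hy k (j+2) j'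
  have h4 := Finset.card_le_card hsub
  simp only [cntk] at *
  omega

lemma count_room (hy : StrictMono y) {k j : ℕ} (hk : k ≤ m)
    (hnc : ¬ Cross y m j) (hjy : j + 1 < y k) :
    j + (k - cntk y k j) + 2 ≤ y k := by
  classical
  have h1 : cntk y k j + ((Finset.range k).filter fun i => ¬ y i ≤ j).card = k := by
    have := Finset.card_filter_add_card_filter_not
      (s := Finset.range k) (p := fun i => y i ≤ j)
    simpa [cntk] using this
  have h2 : ((Finset.range k).filter fun i => ¬ y i ≤ j)
      ⊆ ((Finset.range k).filter fun i => j + 2 ≤ y i ∧ y i ≤ y k - 1) := by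
    intro i hi
    simp only [Finset.mem_filter, Finset.mem_range] at *
    rcases hi with ⟨hik, hiy⟩
    have hne : y i ≠ j + 1 := fun he => hnc ⟨i, by omega, he⟩
    have hlt : y i < y k := hy hik
    omega
  have h3 := card_between hy k (j+2) (y k - 1)
  have h4 := Finset.card_le_card h2
  have h5 := cntk_le (y := y) k j
  omega


end Comb

section Fml

variable {y : ℕ → ℕ} {m : ℕ}

lemma cntk_succ (k j : ℕ) : cntk y (k+1) j = cntk y k j + if y k ≤ j then 1 else 0 := by
  classical
  rw [cntk, cntk, Finset.range_add_one, Finset.filter_insert]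
  by_cases h : y k ≤ j
  · rw [if_pos h, if_pos h, Finset.card_insert_of_notMem (by simp)]
  · rw [if_neg h, if_neg h]; omega

lemma cnt_le_j (hy : StrictMono y) (hyg : ∀ i, i + 1 ≤ y i) (k j : ℕ) :
    cntk y k j ≤ j := by
  have h1 : ((Finset.range k).filter fun i => y i ≤ j)
      ⊆ ((Finset.range k).filter fun i => 1 ≤ y i ∧ y i ≤ j) := by
    intro i hi
    simp only [Finset.mem_filter, Finset.mem_range] at *
    exact ⟨hi.1, le_trans (by omega) (hyg i), hi.2⟩
  have h2 := card_between hy k 1 j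
  have h3 := Finset.card_le_card h1
  simp only [cntk]
  omega

lemma fml_cross {i j : ℕ} (hy : StrictMono y) (him : i < m) (hij : y i = j + 1) (k p : ℕ) :
    fml y m k p j = if i < k then i else if i = k then p else j := by
  have hc : Cross y m j := ⟨i, him, hij⟩
  have hcnt : cntk y m j = i := by rw [cntk_cross hy hij m]; omega
  rw [fml, if_pos hc, hcnt]

lemma fml_nc (hnc : ¬ Cross y m j) (k p : ℕ) :
    fml y m k p j = (j + (k - cntk y k j))
      + (if k < m ∧ p ≤ j + (k - cntk y k j) ∧ j + 1 < y k then 1 else 0) := by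
  rw [fml, if_neg hnc]

lemma cntk_full (hy : StrictMono y) {k j : ℕ} (h : y k ≤ j + 1) (hnc : ¬ (y k = j + 1)) :
    cntk y k j = k := by
  have : ((Finset.range k).filter fun i => y i ≤ j) = Finset.range k := by
    apply Finset.filter_true_of_mem
    intro i hi
    rw [Finset.mem_range] at hi
    have := hy hi
    omega
  rw [cntk, this, Finset.card_range]

lemma fml_nc_ge (hnc : ¬ Cross y m j) (k p : ℕ) : j ≤ fml y m k p j := by
  rw [fml_nc hnc]; omega

lemma count_room_n (hy : StrictMono y) (hyn : ∀ i < m, y i ≤ n) {k j : ℕ} (hk : k ≤ m)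
    (hnc : ¬ Cross y m j) (hjn : j < n) :
    j + (k - cntk y k j) < n := by
  classical
  have h1 : cntk y k j + ((Finset.range k).filter fun i => ¬ y i ≤ j).card = k := by
    have := Finset.card_filter_add_card_filter_not
      (s := Finset.range k) (p := fun i => y i ≤ j)
    simpa [cntk] using this
  have h2 : ((Finset.range k).filter fun i => ¬ y i ≤ j)
      ⊆ ((Finset.range k).filter fun i => j + 2 ≤ y i ∧ y i ≤ n) := by
    intro i hi
    simp only [Finset.mem_filter, Finset.mem_range] at *
    rcases hi with ⟨hik, hiy⟩
    have hne : y i ≠ j + 1 := fun he => hnc ⟨i, by omega, he⟩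
    have := hyn i (by omega)
    omega
  have h3 := card_between hy k (j+2) n
  have h4 := Finset.card_le_card h2
  have h5 := cntk_le (y := y) k j
  omega

lemma fml_lt_n {n : ℕ} (hy : StrictMono y) (hyg : ∀ i, i + 1 ≤ y i)
    (hyn : ∀ i < m, y i ≤ n) {k p j : ℕ} (hk : k ≤ m)
    (hpy : k < m → p < y k) (hjn : j < n) : fml y m k p j < n := by
  classical
  by_cases hc : Cross y m j
  · obtain ⟨i, him, hij⟩ := hc
    rw [fml_cross hy him hij k p]
    have hin : y i ≤ n := hyn i him
    by_cases h1 : i < k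
    · rw [if_pos h1]
      have := hyg i
      omega
    · rw [if_neg h1]
      by_cases h2 : i = k
      · rw [if_pos h2]
        have := hpy (by omega)
        have := hyn k (by omega)
        omega
      · rw [if_neg h2]; omega
  · rw [fml_nc hc]
    by_cases hχ : k < m ∧ p ≤ j + (k - cntk y k j) ∧ j + 1 < y k
    · rw [if_pos hχ]
      have := count_room hy (le_of_lt hχ.1) hc hχ.2.2
      have := hyn k hχ.1
      omega
    · rw [if_neg hχ]
      have := count_room_n hy hyn hk hc hjn
      omega

lemma fml_nc_order (hy : StrictMono y) {k : ℕ} (hk : k ≤ m) {j j' : ℕ}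
    (hnc : ¬ Cross y m j) (hnc' : ¬ Cross y m j') (hjj : j ≤ j') (p : ℕ) :
    fml y m k p j ≤ fml y m k p j' ∧
      fml y m k p j' ≤ fml y m k p j + (j' - j) + 1 := by
  rcases eq_or_lt_of_le hjj with rfl | hlt
  · omega
  rw [fml_nc hnc, fml_nc hnc']
  have h1 := cntk_mono (y := y) k (le_of_lt hlt)
  have h2 := cntk_diff hy hk hnc hlt
  have h3 := cntk_le (y := y) k j
  have h4 := cntk_le (y := y) k j'
  split_ifs <;> omega


lemma cntk_zero (j : ℕ) : cntk y 0 j = 0 := by simp [cntk]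

lemma fml_step (hy : StrictMono y) {k p : ℕ} (hk : k < m) (hkp : k < p)
    (hpy : p + 1 ≤ y k) (j : ℕ) :
    Equiv.swap (p-1) p (fml y m k p j) = fml y m k (p-1) j := by
  classical
  have hp1 : 1 ≤ p := by omega
  by_cases hc : Cross y m j
  · obtain ⟨i, him, hij⟩ := hc
    rw [fml_cross hy him hij k p, fml_cross hy him hij k (p-1)]
    rcases lt_trichotomy i k with h | h | h
    · rw [if_pos h, if_pos h]
      exact Equiv.swap_apply_of_ne_of_ne (by omega) (by omega)
    · rw [if_neg (by omega), if_pos h, if_neg (by omega), if_pos h]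
      exact Equiv.swap_apply_right _ _
    · rw [if_neg (by omega), if_neg (by omega), if_neg (by omega), if_neg (by omega)]
      have := hy h
      exact Equiv.swap_apply_of_ne_of_ne (by omega) (by omega)
  · have hyknej : y k ≠ j + 1 := fun he => hc ⟨k, hk, he⟩
    have hkle := cntk_le (y := y) k j
    rw [fml_nc hc, fml_nc hc]
    by_cases hyk : j + 1 < y k
    · have hroom := count_room hy (le_of_lt hk) hc hyk
      split_ifs with h1 h2 h2
      · exact Equiv.swap_apply_of_ne_of_ne (by omega) (by omega)
      · exact absurd ⟨h1.1, by omega, h1.2.2⟩ h2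
      · rw [show j + (k - cntk y k j) + 0 = p - 1 by omega, Equiv.swap_apply_left]
        omega
      · exact Equiv.swap_apply_of_ne_of_ne (by omega) (by omega)
    · have hcf : cntk y k j = k := cntk_full hy (by omega) hyknej
      rw [if_neg (by omega : ¬ (k < m ∧ p ≤ j + (k - cntk y k j) ∧ j + 1 < y k)),
        if_neg (by omega : ¬ (k < m ∧ p - 1 ≤ j + (k - cntk y k j) ∧ j + 1 < y k))]
      exact Equiv.swap_apply_of_ne_of_ne (by omega) (by omega)

lemma fml_boundary (hy : StrictMono y) (hyg : ∀ i, i + 1 ≤ y i) {k : ℕ}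
    (hk : k < m) (j : ℕ) :
    fml y m k k j = fml y m (k+1) (y (k+1) - 1) j := by
  classical
  by_cases hc : Cross y m j
  · obtain ⟨i, him, hij⟩ := hc
    rw [fml_cross hy him hij, fml_cross hy him hij]
    rcases lt_trichotomy i k with h | h | h
    · rw [if_pos h, if_pos (by omega)]
    · rw [if_neg (by omega), if_pos h, if_pos (by omega)]
      omega
    · rcases eq_or_lt_of_le (by omega : k + 1 ≤ i) with h2 | h2
      · rw [if_neg (by omega), if_neg (by omega), if_neg (by omega), if_pos h2.symm]
        have : y (k+1) = j + 1 := by rw [h2]; exact hij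
        omega
      · rw [if_neg (by omega), if_neg (by omega), if_neg (by omega), if_neg (by omega)]
  · have hyknej : y k ≠ j + 1 := fun he => hc ⟨k, hk, he⟩
    rw [fml_nc hc, fml_nc hc]
    have hsucc := cntk_succ (y := y) (k := k) (j := j)
    have hle := cnt_le_j hy hyg k j
    have hle2 := cntk_le (y := y) k j
    have hle3 := cntk_le (y := y) (k+1) j
    have hχR : ¬ (k + 1 < m ∧ y (k+1) - 1 ≤ j + (k + 1 - cntk y (k+1) j)
        ∧ j + 1 < y (k+1)) := by
      intro h
      have := count_room hy (by omega : k + 1 ≤ m) hc h.2.2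
      omega
    rw [if_neg hχR]
    by_cases hyk : j + 1 < y k
    · have he : cntk y (k+1) j = cntk y k j := by
        rw [hsucc, if_neg (by omega)]
        omega
      rw [if_pos ⟨hk, by omega, hyk⟩]
      omega
    · have he : cntk y (k+1) j = cntk y k j + 1 := by
        rw [hsucc, if_pos (by omega)]
      rw [if_neg (by omega : ¬ (k < m ∧ k ≤ j + (k - cntk y k j) ∧ j + 1 < y k))]
      omega

lemma fml_m_pind (hy : StrictMono y) (p p' j : ℕ) :
    fml y m m p j = fml y m m p' j := by
  classical
  by_cases hc : Cross y m j
  · obtain ⟨i, him, hij⟩ := hc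
    rw [fml_cross hy him hij, fml_cross hy him hij, if_pos him, if_pos him]
  · rw [fml_nc hc, fml_nc hc, if_neg (by omega), if_neg (by omega)]

lemma fml_flat_id (hy : StrictMono y) (hyg : ∀ i, i + 1 ≤ y i) :
    ∀ k, k ≤ m → (∀ i, i < k → y i = i + 1) →
      ∀ p, (k < m → p = y k - 1) → ∀ j, fml y m k p j = j := by
  intro k
  induction k with
  | zero =>
    intro _ _ p hp j
    by_cases hc : Cross y m j
    · obtain ⟨i, him, hij⟩ := hc
      rw [fml_cross hy him hij]
      rcases Nat.eq_zero_or_pos i with h | h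
      · rw [if_neg (by omega), if_pos h]
        rw [h] at hij
        have := hp (by omega)
        omega
      · rw [if_neg (by omega), if_neg (by omega)]
    · rw [fml_nc hc, cntk_zero]
      split_ifs with h
      · exfalso
        have hp' := hp h.1
        have := hyg 0
        omega
      · omega
  | succ k ih =>
    intro hk1 hflat p hp j
    have hyk : y k = k + 1 := hflat k (by omega)
    have hkm : k < m := by omega
    have hstep : fml y m k k j = fml y m (k+1) (y (k+1) - 1) j :=
      fml_boundary hy hyg hkm j
    have hbase : fml y m k k j = j := by
      apply ih (by omega) (fun i hi => hflat i (by omega)) k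
      intro _
      omega
    rcases eq_or_lt_of_le hk1 with h | h
    · have hpind : fml y m (k+1) p j = fml y m (k+1) (y (k+1) - 1) j := by
        rw [h]
        exact fml_m_pind hy p _ j
      rw [hpind, ← hstep, hbase]
    · rw [hp h, ← hstep, hbase]

lemma fml_chain (hy : StrictMono y) (hyg : ∀ i, i + 1 ≤ y i) :
    ∀ b a, a < b → b ≤ m → (∀ i, a < i → i < b → y i = i + 1) →
      ∀ p, (b < m → p = y b - 1) →
      ∀ j, fml y m a a j = fml y m b p j := by
  intro b
  induction b with
  | zero => omega
  | succ b ih =>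
    intro a hab hbm hflat p hp j
    have hstepb : ∀ p', (b + 1 < m → p' = y (b+1) - 1) →
        fml y m b b j = fml y m (b+1) p' j := by
      intro p' hp'
      have hstep := fml_boundary hy hyg (by omega : b < m) j
      rcases eq_or_lt_of_le hbm with h | h
      · have hpind : fml y m (b+1) p' j = fml y m (b+1) (y (b+1) - 1) j := by
          rw [h]
          exact fml_m_pind hy p' _ j
        rw [hpind, ← hstep]
      · rw [hp' h, hstep]
    rcases eq_or_lt_of_le (by omega : a + 1 ≤ b + 1) with h | h
    · have : a = b := by omega
      subst this
      exact hstepb p hp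
    · have h1 : fml y m a a j = fml y m b (y b - 1) j := by
        apply ih a (by omega) (by omega) (fun i t1 t2 => hflat i t1 (by omega))
        intro _; rfl
      have h2 : y b = b + 1 := hflat b (by omega) (by omega)
      have h3 : fml y m b (y b - 1) j = fml y m b b j := by
        rw [h2, Nat.add_sub_cancel]
      rw [h1, h3]
      exact hstepb p hp


end Fml

/-! ### The timeline of swaps -/

section Timeline

variable (y : ℕ → ℕ) (m : ℕ)

/-- number of swaps in stage `k`. -/
def dstage (k : ℕ) : ℕ := y k - 1 - k

/-- starting time of stage `k`. -/
def off : ℕ → ℕ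
  | 0 => 0
  | (k+1) => off k + dstage y k

/-- total number of swaps. -/
def NN : ℕ := off y m

/-- current stage at time `s`. -/
def KK (s : ℕ) : ℕ := Nat.findGreatest (fun k => off y k ≤ s) m

/-- swap position at time `s`. -/
def cs (s : ℕ) : ℕ := y (KK y m s) - 2 - (s - off y (KK y m s))

/-- canonical `p`-parameter at time `t`. -/
def pcan (t : ℕ) : ℕ :=
  if KK y m t < m then y (KK y m t) - 1 - (t - off y (KK y m t)) else m

/-- the permutation accumulated after `t` swaps. -/
def FF : ℕ → Equiv.Perm ℕ
  | 0 => Equiv.refl ℕ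
  | (t+1) => (FF t).trans (Equiv.swap (cs y m t) (cs y m t + 1))

variable {y m}

lemma off_succ (k : ℕ) : off y (k+1) = off y k + dstage y k := rfl

lemma off_zero : off y 0 = 0 := rfl

lemma off_mono {k k' : ℕ} (h : k ≤ k') : off y k ≤ off y k' := by
  induction k' with
  | zero =>
    have : k = 0 := by omega
    subst this
    exact le_refl _
  | succ k' ih =>
    rcases Nat.lt_or_ge k (k'+1) with h2 | h2
    · have := ih (by omega)
      have e := off_succ (y := y) k'
      omega
    · have : k = k' + 1 := by omega
      subst this
      exact le_refl _

lemma KK_le (s : ℕ) : KK y m s ≤ m := Nat.findGreatest_le m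

lemma KK_spec (s : ℕ) : off y (KK y m s) ≤ s := by
  have h := Nat.findGreatest_spec (P := fun k => off y k ≤ s) (n := m) (m := 0)
    (by omega) (show off y 0 ≤ s by rw [off_zero]; omega)
  exact h

lemma KK_lt (hs : s < NN y m) :
    KK y m s < m ∧ s - off y (KK y m s) < dstage y (KK y m s) := by
  have h1 := KK_spec (y := y) (m := m) s
  have h2 := KK_le (y := y) (m := m) s
  have hm : KK y m s < m := by
    rcases eq_or_lt_of_le h2 with h | h
    · rw [NN] at hs; rw [h] at h1; omega
    · exact h
  refine ⟨hm, ?_⟩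
  by_contra hcon
  push_neg at hcon
  have h3 : off y (KK y m s + 1) ≤ s := by
    rw [off_succ]; omega
  have h4 := Nat.le_findGreatest (P := fun k => off y k ≤ s) (by omega : KK y m s + 1 ≤ m) h3
  have he : Nat.findGreatest (fun k => off y k ≤ s) m = KK y m s := rfl
  omega

lemma KK_uniq {k s : ℕ} (hk : k < m) (h1 : off y k ≤ s) (h2 : s < off y (k+1)) :
    KK y m s = k := by
  have hle := Nat.le_findGreatest (P := fun k => off y k ≤ s) (by omega : k ≤ m) h1
  have hspec := KK_spec (y := y) (m := m) s
  have he : Nat.findGreatest (fun k => off y k ≤ s) m = KK y m s := rfl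
  rw [he] at hle
  by_contra hne
  have hgt : k + 1 ≤ KK y m s := by omega
  have := off_mono (y := y) hgt
  omega

lemma KK_top {s : ℕ} (hs : NN y m ≤ s) : KK y m s = m := by
  have h1 := Nat.le_findGreatest (P := fun k => off y k ≤ s) (le_refl m)
    (by rw [NN] at hs; omega)
  have h2 := KK_le (y := y) (m := m) s
  have he : Nat.findGreatest (fun k => off y k ≤ s) m = KK y m s := rfl
  omega

lemma off_flat (hyg : ∀ i, i + 1 ≤ y i) {a b : ℕ} (hab : a ≤ b)
    (he : off y a = off y b) : ∀ i, a ≤ i → i < b → y i = i + 1 := by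
  intro i h1 h2
  have o1 : off y a ≤ off y i := off_mono (by omega)
  have o2 : off y (i+1) ≤ off y b := off_mono (by omega)
  have o3 : off y (i+1) = off y i + dstage y i := off_succ i
  have := hyg i
  have : dstage y i = 0 := by omega
  rw [dstage] at this
  omega

lemma off_zero_flat (hyg : ∀ i, i + 1 ≤ y i) {k : ℕ} (he : off y k = 0) :
    ∀ i, i < k → y i = i + 1 := by
  intro i hi
  exact off_flat hyg (by omega : 0 ≤ k) (by rw [off_zero]; omega) i (by omega) hi

lemma ident (hy : StrictMono y) (hyg : ∀ i, i + 1 ≤ y i) :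
    ∀ t, t ≤ NN y m → ∀ j, FF y m t j = fml y m (KK y m t) (pcan y m t) j := by
  intro t
  induction t with
  | zero =>
    intro _ j
    have h0 : off y (KK y m 0) = 0 := by
      have := KK_spec (y := y) (m := m) 0
      omega
    have hflat := off_zero_flat hyg h0
    rw [show FF y m 0 j = j from rfl]
    refine (fml_flat_id hy hyg (KK y m 0) (KK_le 0) hflat _ ?_ j).symm
    intro hlt
    rw [pcan, if_pos hlt, h0]
    omega
  | succ t ih =>
    intro ht j
    obtain ⟨hkm, hu⟩ := KK_lt (y := y) (m := m) (s := t) (by omega)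
    set k := KK y m t with hk
    set u := t - off y k with hudef
    have hoff : off y k ≤ t := KK_spec t
    have hyk := hyg k
    have hd : dstage y k = y k - 1 - k := rfl
    set p := y k - 1 - u with hpdef
    have hp1 : k < p := by omega
    have hp2 : p + 1 ≤ y k := by omega
    have hcs : cs y m t = p - 1 := by
      rw [cs, ← hk, ← hudef, hpdef]
      omega
    have hpcan : pcan y m t = p := by
      rw [pcan, if_pos hkm, ← hk, ← hudef]
    have h1p : 1 ≤ p := by omega
    have hstep : FF y m (t+1) j = Equiv.swap (p-1) p (FF y m t j) := by
      rw [show FF y m (t+1) j = Equiv.swap (cs y m t) (cs y m t + 1) (FF y m t j) from rfl,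
        hcs, Nat.sub_add_cancel h1p]
    rw [hstep, ih (by omega) j, hpcan, fml_step hy hkm hp1 hp2 j]
    -- now relate fml k (p-1) with state at t+1
    rcases Nat.lt_or_ge (u + 1) (dstage y k) with hcase | hcase
    · have hK1 : KK y m (t+1) = k := by
        apply KK_uniq hkm (by omega)
        rw [off]
        omega
      have hpc : pcan y m (t+1) = p - 1 := by
        rw [pcan, hK1, if_pos hkm]
        omega
      rw [hK1, hpc]
    · -- stage boundary
      have hdu : u + 1 = dstage y k := by omega
      have hpk : p - 1 = k := by omega
      have hoff1 : off y (k+1) = t + 1 := by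
        rw [off_succ]
        omega
      set k2 := KK y m (t+1) with hk2
      have hk2ge : k + 1 ≤ k2 := by
        rw [hk2, KK]
        exact Nat.le_findGreatest (by omega) (by omega)
      have hk2le : k2 ≤ m := KK_le _
      have hoffk2 : off y k2 = t + 1 := by
        have h1 : off y (k+1) ≤ off y k2 := off_mono hk2ge
        have h2 := KK_spec (y := y) (m := m) (t+1)
        rw [← hk2] at h2
        omega
      have hflat : ∀ i, k < i → i < k2 → y i = i + 1 := by
        intro i h1 h2
        exact off_flat hyg (by omega : k + 1 ≤ k2) (by omega) i (by omega) h2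
      have hchain := fml_chain hy hyg k2 k (by omega) hk2le hflat
        (pcan y m (t+1)) ?_ j
      · rw [hpk, hchain]
      · intro hlt
        rw [pcan, ← hk2, if_pos hlt, hoffk2]
        omega


end Timeline

/-! ### The path of unitaries -/

noncomputable def RotC (c : ℕ) (θ : ℝ) : Matrix (Fin n) (Fin n) ℂ :=
  if h : c + 1 < n then Rot ⟨c, by omega⟩ ⟨c+1, h⟩ θ else 1

lemma finmk_ne {c : ℕ} (h : c + 1 < n) : (⟨c, by omega⟩ : Fin n) ≠ ⟨c+1, h⟩ := by
  intro he; rw [Fin.mk.injEq] at he; omega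

lemma rotC_zero (c : ℕ) : (RotC c 0 : Matrix (Fin n) (Fin n) ℂ) = 1 := by
  rw [RotC]
  split_ifs with h
  · exact rot_zero _ _ (finmk_ne h)
  · rfl

lemma rotC_unitary (c : ℕ) (θ : ℝ) :
    (RotC c θ : Matrix (Fin n) (Fin n) ℂ) ∈ Matrix.unitaryGroup (Fin n) ℂ := by
  rw [RotC]
  split_ifs with h
  · exact rot_unitary (finmk_ne h) θ
  · exact Submonoid.one_mem _

noncomputable def θs (N s : ℕ) (ξ : ℝ) : ℝ := (Real.pi/2) * min 1 (max 0 ((N:ℝ) * ξ - s))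

lemma θs_cont (N s : ℕ) : Continuous (θs N s) := by
  apply Continuous.mul continuous_const
  exact Continuous.min continuous_const
    (Continuous.max continuous_const ((continuous_const.mul continuous_id).sub continuous_const))

variable (y : ℕ → ℕ) (m : ℕ)

noncomputable def Wt : ℕ → Matrix (Fin n) (Fin n) ℂ
  | 0 => 1
  | (t+1) => RotC (cs y m t) (Real.pi/2) * Wt t

noncomputable def PW : ℕ → ℝ → Matrix (Fin n) (Fin n) ℂ
  | 0, _ => 1
  | (t+1), ξ => RotC (cs y m t) (θs (NN y m) t ξ) * PW t ξ

noncomputable def Wfun (ξ : ℝ) : Matrix (Fin n) (Fin n) ℂ := PW y m (NN y m) ξ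

variable {y m}

lemma rotC_cont (c : ℕ) {θf : ℝ → ℝ} (h : Continuous θf) :
    Continuous fun ξ => (RotC c (θf ξ) : Matrix (Fin n) (Fin n) ℂ) := by
  rw [show (fun ξ => (RotC c (θf ξ) : Matrix (Fin n) (Fin n) ℂ))
      = if hc : c + 1 < n then
          (fun ξ => Rot (⟨c, by omega⟩ : Fin n) ⟨c+1, hc⟩ (θf ξ))
        else (fun _ => 1) from by
    split_ifs with hc
    · funext ξ; rw [RotC, dif_pos hc]
    · funext ξ; rw [RotC, dif_neg hc]]
  split_ifs with hc
  · set a : Fin n := ⟨c, by omega⟩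
    set b : Fin n := ⟨c+1, hc⟩
    apply continuous_matrix
    intro p q
    have hcos : Continuous fun ξ => ((Real.cos (θf ξ) : ℝ) : ℂ) :=
      Complex.continuous_ofReal.comp (Real.continuous_cos.comp h)
    have hsin : Continuous fun ξ => ((Real.sin (θf ξ) : ℝ) : ℂ) :=
      Complex.continuous_ofReal.comp (Real.continuous_sin.comp h)
    by_cases h1 : p = a ∧ q = a
    · simpa only [Rot, Matrix.of_apply, if_pos h1] using hcos
    · by_cases h2 : p = a ∧ q = b
      · simpa only [Rot, Matrix.of_apply, if_neg h1, if_pos h2] using (show Continuous fun ξ => -((Real.sin (θf ξ) : ℝ) : ℂ) from hsin.neg)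
      · by_cases h3 : p = b ∧ q = a
        · simpa only [Rot, Matrix.of_apply, if_neg h1, if_neg h2, if_pos h3] using hsin
        · by_cases h4 : p = b ∧ q = b
          · simpa only [Rot, Matrix.of_apply, if_neg h1, if_neg h2, if_neg h3, if_pos h4]
              using hcos
          · by_cases h5 : p = q
            · simp only [Rot, Matrix.of_apply, if_neg h1, if_neg h2, if_neg h3, if_neg h4,
                if_pos h5]
              exact continuous_const
            · simp only [Rot, Matrix.of_apply, if_neg h1, if_neg h2, if_neg h3, if_neg h4,
                if_neg h5]
              exact continuous_const
  · exact continuous_const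

lemma PW_cont (t : ℕ) : Continuous (PW y m t : ℝ → Matrix (Fin n) (Fin n) ℂ) := by
  induction t with
  | zero => exact continuous_const
  | succ t ih =>
    exact Continuous.mul (rotC_cont _ (θs_cont _ _)) ih

lemma Wfun_cont : Continuous (Wfun y m : ℝ → Matrix (Fin n) (Fin n) ℂ) := PW_cont _

lemma PW_eq_Wt {t : ℕ} {ξ : ℝ} (h : ∀ s, s < t → θs (NN y m) s ξ = Real.pi/2) :
    (PW y m t ξ : Matrix (Fin n) (Fin n) ℂ) = Wt y m t := by
  induction t with
  | zero => rfl
  | succ t ih =>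
    show RotC (cs y m t) (θs (NN y m) t ξ) * PW y m t ξ = RotC (cs y m t) (Real.pi/2) * Wt y m t
    rw [h t (by omega), ih (fun s hs => h s (by omega))]

lemma PW_stall {a b : ℕ} {ξ : ℝ} (hab : a ≤ b)
    (h : ∀ s, a ≤ s → s < b → θs (NN y m) s ξ = 0) :
    (PW y m b ξ : Matrix (Fin n) (Fin n) ℂ) = PW y m a ξ := by
  induction b with
  | zero =>
    have : a = 0 := by omega
    rw [this]
  | succ b ih =>
    rcases Nat.lt_or_ge a (b+1) with h2 | h2
    · show RotC (cs y m b) (θs (NN y m) b ξ) * PW y m b ξ = PW y m a ξ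
      rw [h b (by omega) (by omega), rotC_zero, one_mul, ih (by omega)]
      intro s h3 h4
      exact h s h3 (by omega)
    · have : a = b + 1 := by omega
      rw [this]

lemma Wfun_zeroξ : (Wfun y m 0 : Matrix (Fin n) (Fin n) ℂ) = 1 := by
  rw [Wfun]
  rw [PW_stall (by omega : 0 ≤ NN y m)]
  · rfl
  · intro s _ _
    rw [θs]
    have h1 : (NN y m : ℝ) * 0 - s = -s := by ring
    rw [h1, max_eq_left (neg_nonpos.mpr (Nat.cast_nonneg s))]
    norm_num

lemma Wfun_oneξ : (Wfun y m 1 : Matrix (Fin n) (Fin n) ℂ) = Wt y m (NN y m) := by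
  rw [Wfun, PW_eq_Wt]
  intro s hs
  rw [θs]
  have h1 : (1:ℝ) ≤ (NN y m : ℝ) * 1 - s := by
    have : (s:ℝ) + 1 ≤ (NN y m : ℝ) := by exact_mod_cast hs
    linarith
  rw [max_eq_right (by linarith), min_eq_left h1]
  ring

lemma Wfun_eval {ξ : ℝ} (h0 : 0 ≤ ξ) (h1 : ξ ≤ 1) :
    ∃ t θ, t ≤ NN y m ∧ (t < NN y m ∨ θ = 0) ∧
      (Wfun y m ξ : Matrix (Fin n) (Fin n) ℂ) = RotC (cs y m t) θ * Wt y m t := by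
  rcases Nat.eq_zero_or_pos (NN y m) with hN | hN
  · refine ⟨0, 0, by omega, Or.inr rfl, ?_⟩
    rw [rotC_zero, one_mul, Wfun, hN]
    rfl
  · set N := NN y m with hNdef
    set t := min (Nat.floor ((N:ℝ) * ξ)) (N - 1) with htdef
    have htN : t < N := by
      have : t ≤ N - 1 := min_le_right _ _
      omega
    refine ⟨t, θs N t ξ, by omega, Or.inl htN, ?_⟩
    have hfloor_le : (Nat.floor ((N:ℝ) * ξ) : ℝ) ≤ (N:ℝ) * ξ :=
      Nat.floor_le (by positivity)
    have hlt_floor : (N:ℝ) * ξ < Nat.floor ((N:ℝ) * ξ) + 1 :=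
      Nat.lt_floor_add_one _
    have step1 : (Wfun y m ξ : Matrix (Fin n) (Fin n) ℂ) = PW y m (t+1) ξ := by
      rw [Wfun, ← hNdef]
      apply PW_stall (by omega)
      intro s hs _
      rw [θs]
      have hzero : (N:ℝ) * ξ - s ≤ 0 := by
        rcases le_or_gt (Nat.floor ((N:ℝ) * ξ)) (N - 1) with hmin | hmin
        · have het : t = Nat.floor ((N:ℝ) * ξ) := by rw [htdef]; omega
          have : (N:ℝ) * ξ < t + 1 := by rw [het]; exact hlt_floor
          have hts : (t:ℝ) + 1 ≤ (s:ℝ) := by exact_mod_cast hs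
          linarith
        · have het : t = N - 1 := by rw [htdef]; omega
          have hsN : (N:ℝ) ≤ (s:ℝ) := by
            have : N ≤ s := by omega
            exact_mod_cast this
          nlinarith
      rw [max_eq_left hzero]
      simp
    have step2 : (PW y m (t+1) ξ : Matrix (Fin n) (Fin n) ℂ)
        = RotC (cs y m t) (θs N t ξ) * PW y m t ξ := rfl
    have step3 : (PW y m t ξ : Matrix (Fin n) (Fin n) ℂ) = Wt y m t := by
      apply PW_eq_Wt
      intro s hs
      rw [θs]
      have hone : (1:ℝ) ≤ (N:ℝ) * ξ - s := by
        have hts : (t:ℝ) ≤ (N:ℝ) * ξ := by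
          have : t ≤ Nat.floor ((N:ℝ) * ξ) := min_le_left _ _
          calc (t:ℝ) ≤ (Nat.floor ((N:ℝ) * ξ) : ℝ) := by exact_mod_cast this
            _ ≤ (N:ℝ) * ξ := hfloor_le
        have : (s:ℝ) + 1 ≤ (t:ℝ) := by exact_mod_cast hs
        linarith
      rw [max_eq_right (by linarith), min_eq_left hone]
      ring
    rw [step1, step2, step3]

lemma Wt_unitary (t : ℕ) :
    (Wt y m t : Matrix (Fin n) (Fin n) ℂ) ∈ Matrix.unitaryGroup (Fin n) ℂ := by
  induction t with
  | zero => exact Submonoid.one_mem _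
  | succ t ih => exact Submonoid.mul_mem _ (rotC_unitary _ _) ih

lemma Wfun_unitary {ξ : ℝ} (h0 : 0 ≤ ξ) (h1 : ξ ≤ 1) :
    (Wfun y m ξ : Matrix (Fin n) (Fin n) ℂ) ∈ Matrix.unitaryGroup (Fin n) ℂ := by
  obtain ⟨t, θ, _, _, he⟩ := Wfun_eval (y := y) (m := m) (n := n) h0 h1
  rw [he]
  exact Submonoid.mul_mem _ (rotC_unitary _ _) (Wt_unitary t)


/-! ### Main bandwidth estimates -/

section Main

variable {y : ℕ → ℕ} {m : ℕ}

lemma step_facts (hyg : ∀ i, i + 1 ≤ y i) (hyn : ∀ i < m, y i ≤ n) {t : ℕ}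
    (ht : t < NN y m) :
    KK y m t < m ∧ cs y m t + 1 = pcan y m t ∧ cs y m t + 2 ≤ n ∧
      pcan y m t < y (KK y m t) ∧ KK y m t < pcan y m t := by
  obtain ⟨hkm, hu⟩ := KK_lt ht
  have hoff := KK_spec (y := y) (m := m) t
  have h1 := hyg (KK y m t)
  have h2 := hyn _ hkm
  rw [dstage] at hu
  rw [cs, pcan, if_pos hkm]
  omega

lemma Wt_mono (hyg : ∀ i, i + 1 ≤ y i) (hyn : ∀ i < m, y i ≤ n) :
    ∀ t, t ≤ NN y m → ∃ ε, IsMono (FF y m t) ε (Wt y m t : Matrix (Fin n) (Fin n) ℂ) := by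
  intro t
  induction t with
  | zero => exact fun _ => ⟨fun _ => 1, mono_one⟩
  | succ t ih =>
    intro ht
    obtain ⟨ε, hε⟩ := ih (by omega)
    obtain ⟨_, _, hc, _, _⟩ := step_facts (n := n) hyg hyn (show t < NN y m by omega)
    have hc' : cs y m t + 1 < n := by omega
    have hrot := mono_rot_halfpi (n := n) (cs y m t) hc'
    have hre : (RotC (cs y m t) (Real.pi/2) : Matrix (Fin n) (Fin n) ℂ)
        = Rot ⟨cs y m t, by omega⟩ ⟨cs y m t + 1, hc'⟩ (Real.pi/2) := dif_pos hc'
    refine ⟨fun q => ε q * (if FF y m t q = cs y m t + 1 then (-1:ℂ) else 1), ?_⟩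
    have hm2 := mono_mul hrot hε
    show IsMono (FF y m (t+1)) _ (RotC (cs y m t) (Real.pi/2) * Wt y m t)
    rw [hre]
    exact hm2

/-- positions of two non-cross rows: distance grows by at most one, and never
moves up. -/
lemma FF_dist (hy : StrictMono y) (hyg : ∀ i, i + 1 ≤ y i) {t : ℕ} (ht : t ≤ NN y m)
    {j j' : ℕ} (hnc : ¬ Cross y m j) (hnc' : ¬ Cross y m j') :
    Nat.dist (FF y m t j) (FF y m t j') ≤ Nat.dist j j' + 1 := by
  have hident := ident hy hyg t ht
  have hkm := KK_le (y := y) (m := m) t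
  rcases le_total j j' with h | h
  · have := fml_nc_order (p := pcan y m t) hy hkm hnc hnc' h
    rw [hident j, hident j']
    simp only [Nat.dist]
    omega
  · have := fml_nc_order (p := pcan y m t) hy hkm hnc' hnc h
    rw [hident j, hident j']
    simp only [Nat.dist]
    omega

lemma FF_ge (hy : StrictMono y) (hyg : ∀ i, i + 1 ≤ y i) {t : ℕ} (ht : t ≤ NN y m)
    {j : ℕ} (hnc : ¬ Cross y m j) : j ≤ FF y m t j := by
  rw [ident hy hyg t ht j]
  exact fml_nc_ge hnc _ _

/-- at an intermediate time `t < NN`, the row at position `cs t + 1` is a cross row. -/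
lemma FF_cross_pos (hy : StrictMono y) (hyg : ∀ i, i + 1 ≤ y i)
    (hyn : ∀ i < m, y i ≤ n) {t : ℕ} (ht : t < NN y m) :
    FF y m t (y (KK y m t) - 1) = cs y m t + 1
      ∧ Cross y m (y (KK y m t) - 1) := by
  obtain ⟨hkm, hcp, hc, hpy, hkp⟩ := step_facts (n := n) hyg hyn ht
  have h1 := hyg (KK y m t)
  constructor
  · rw [ident hy hyg t (by omega) _]
    rw [fml_cross hy hkm (show y (KK y m t) = (y (KK y m t) - 1) + 1 by omega)]
    rw [if_neg (by omega), if_pos rfl]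
    omega
  · exact ⟨KK y m t, hkm, by omega⟩

/-- at the final time, cross `i` sits at position `i`. -/
lemma FF_final (hy : StrictMono y) (hyg : ∀ i, i + 1 ≤ y i) {i : ℕ} (him : i < m) :
    FF y m (NN y m) (y i - 1) = i := by
  have h1 := hyg i
  rw [ident hy hyg _ (le_refl _) _]
  rw [KK_top (le_refl _)]
  rw [fml_cross hy him (show y i = (y i - 1) + 1 by omega)]
  rw [if_pos him]

/-- rows and columns of the conjugated matrix at cross positions vanish. -/
lemma conj_cross_zero {t : ℕ} {ε : ℕ → ℂ} {W : Matrix (Fin n) (Fin n) ℂ}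
    (hmono : IsMono (FF y m t) ε W) (T : Matrix (Fin n) (Fin n) ℂ)
    (hcross : ∀ j : Fin n, Cross y m (j : ℕ) → (∀ q, T j q = 0) ∧ (∀ p, T p j = 0))
    {b : Fin n} (hb : Cross y m ((FF y m t).symm (b : ℕ))) :
    (∀ q, (W * T * star W) b q = 0) ∧ (∀ p, (W * T * star W) p b = 0) := by
  constructor
  · intro q
    rw [hmono.conj T b q]
    rw [(hcross _ hb).1]
    ring
  · intro p
    rw [hmono.conj T p b]
    rw [(hcross _ hb).2]
    ring

lemma conj_band (hy : StrictMono y) (hyg : ∀ i, i + 1 ≤ y i) (hyn : ∀ i < m, y i ≤ n)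
    {t : ℕ} (ht : t ≤ NN y m) {ε : ℕ → ℂ} {W : Matrix (Fin n) (Fin n) ℂ}
    (hmono : IsMono (FF y m t) ε W) (T : Matrix (Fin n) (Fin n) ℂ)
    (hcross : ∀ j : Fin n, Cross y m (j : ℕ) → (∀ q, T j q = 0) ∧ (∀ p, T p j = 0))
    (p q : Fin n) (hdist : bandwidth T + 1 ≤ Nat.dist (p : ℕ) (q : ℕ)) :
    (W * T * star W) p q = 0 := by
  rw [hmono.conj T p q]
  set a : ℕ := (FF y m t).symm (p : ℕ) with ha
  set b : ℕ := (FF y m t).symm (q : ℕ) with hb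
  by_cases hca : Cross y m a
  · rw [(hcross _ hca).1]
    ring
  · by_cases hcb : Cross y m b
    · rw [(hcross _ hcb).2]
      ring
    · have hFa : FF y m t a = (p : ℕ) := (FF y m t).apply_symm_apply _
      have hFb : FF y m t b = (q : ℕ) := (FF y m t).apply_symm_apply _
      have hd := FF_dist hy hyg ht hca hcb
      rw [hFa, hFb] at hd
      have hT : T ⟨a, hmono.symm_lt p.2⟩ ⟨b, hmono.symm_lt q.2⟩ = 0 := by
        apply bandwidth_spec
        simp only [Nat.dist] at *
        omega
      rw [hT]
      ring

lemma rot_conj_band {c r : ℕ} (hc : c + 1 < n) (θ : ℝ)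
    {M : Matrix (Fin n) (Fin n) ℂ}
    (hM : ∀ p q : Fin n, r + 1 ≤ Nat.dist (p : ℕ) (q : ℕ) → M p q = 0)
    (hrow : ∀ q, M ⟨c+1, hc⟩ q = 0) (hcol : ∀ p, M p ⟨c+1, hc⟩ = 0)
    (p q : Fin n) (hdist : r + 2 ≤ Nat.dist (p : ℕ) (q : ℕ)) :
    (Rot ⟨c, by omega⟩ ⟨c+1, hc⟩ θ * M * star (Rot ⟨c, by omega⟩ ⟨c+1, hc⟩ θ)) p q = 0 := by
  set A : Fin n := ⟨c, by omega⟩ with hA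
  set B : Fin n := ⟨c+1, hc⟩ with hB
  have hab : A ≠ B := finmk_ne hc
  rw [Matrix.mul_assoc, rot_mul_apply hab]
  have hM' : ∀ (u : Fin n), (M * star (Rot A B θ)) u q =
      if q = A then Real.cos θ * M u A - Real.sin θ * M u B
      else if q = B then Real.sin θ * M u A + Real.cos θ * M u B
      else M u q := fun u => mul_rotstar_apply hab θ M u q
  have hvA : (A : ℕ) = c := rfl
  have hvB : (B : ℕ) = c + 1 := rfl
  by_cases hpA : p = A
  · rw [if_pos hpA, hM' A, hM' B]
    by_cases hqA : q = A
    · exfalso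
      have : (p:ℕ) = c := by rw [hpA]
      have : (q:ℕ) = c := by rw [hqA]
      simp only [Nat.dist] at hdist
      omega
    · by_cases hqB : q = B
      · exfalso
        have : (p:ℕ) = c := by rw [hpA]
        have : (q:ℕ) = c + 1 := by rw [hqB]
        simp only [Nat.dist] at hdist
        omega
      · rw [if_neg hqA, if_neg hqB, if_neg hqA, if_neg hqB]
        have h1 : M A q = 0 := by
          apply hM
          have : (p:ℕ) = c := by rw [hpA]
          simp only [Nat.dist, hvA] at *
          omega
        have h2 : M B q = 0 := hrow q
        rw [h1, h2]
        ring
  · by_cases hpB : p = B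
    · rw [if_neg hpA, if_pos hpB, hM' A, hM' B]
      by_cases hqA : q = A
      · exfalso
        have : (p:ℕ) = c + 1 := by rw [hpB]
        have : (q:ℕ) = c := by rw [hqA]
        simp only [Nat.dist] at hdist
        omega
      · by_cases hqB : q = B
        · exfalso
          have : (p:ℕ) = c + 1 := by rw [hpB]
          have : (q:ℕ) = c + 1 := by rw [hqB]
          simp only [Nat.dist] at hdist
          omega
        · rw [if_neg hqA, if_neg hqB, if_neg hqA, if_neg hqB]
          have h1 : M A q = 0 := by
            apply hM
            have : (p:ℕ) = c + 1 := by rw [hpB]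
            simp only [Nat.dist, hvA] at *
            omega
          have h2 : M B q = 0 := hrow q
          rw [h1, h2]
          ring
    · rw [if_neg hpA, if_neg hpB, hM' p]
      by_cases hqA : q = A
      · rw [if_pos hqA]
        have h1 : M p A = 0 := by
          apply hM
          have : (q:ℕ) = c := by rw [hqA]
          simp only [Nat.dist, hvA] at *
          omega
        have h2 : M p B = 0 := hcol p
        rw [h1, h2]
        ring
      · by_cases hqB : q = B
        · rw [if_neg hqA, if_pos hqB]
          have h1 : M p A = 0 := by
            apply hM
            have : (q:ℕ) = c + 1 := by rw [hqB]
            simp only [Nat.dist, hvA] at *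
            omega
          have h2 : M p B = 0 := hcol p
          rw [h1, h2]
          ring
        · rw [if_neg hqA, if_neg hqB]
          apply hM
          omega


lemma conj_band_full (hy : StrictMono y) (hyg : ∀ i, i + 1 ≤ y i)
    (hyn : ∀ i < m, y i ≤ n) (T : Matrix (Fin n) (Fin n) ℂ)
    (hcross : ∀ j : Fin n, Cross y m (j : ℕ) → (∀ q, T j q = 0) ∧ (∀ p, T p j = 0))
    {ξ : ℝ} (h0 : 0 ≤ ξ) (h1 : ξ ≤ 1) :
    bandwidth (Wfun y m ξ * T * star (Wfun y m ξ)) ≤ bandwidth T + 2 := by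
  obtain ⟨t, θ, htN, hor, he⟩ := Wfun_eval (y := y) (m := m) (n := n) h0 h1
  obtain ⟨ε, hmono⟩ := Wt_mono hyg hyn t htN
  have hM := conj_band hy hyg hyn htN hmono T hcross
  have hassoc : Wfun y m ξ * T * star (Wfun y m ξ)
      = RotC (cs y m t) θ * (Wt y m t * T * star (Wt y m t)) * star (RotC (cs y m t) θ) := by
    rw [he]
    simp only [Matrix.star_mul, Matrix.mul_assoc]
  rcases hor with hlt | hzero
  · obtain ⟨hkm, hcp, hc, hpy, hkp⟩ := step_facts (n := n) hyg hyn hlt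
    have hc' : cs y m t + 1 < n := by omega
    have hre : (RotC (cs y m t) θ : Matrix (Fin n) (Fin n) ℂ)
        = Rot ⟨cs y m t, by omega⟩ ⟨cs y m t + 1, hc'⟩ θ := dif_pos hc'
    obtain ⟨hFc, hCc⟩ := FF_cross_pos (n := n) hy hyg hyn hlt
    have hsymm : (FF y m t).symm ((⟨cs y m t + 1, hc'⟩ : Fin n) : ℕ)
        = y (KK y m t) - 1 := by
      rw [Equiv.symm_apply_eq]
      exact hFc.symm
    have hb : Cross y m ((FF y m t).symm ((⟨cs y m t + 1, hc'⟩ : Fin n) : ℕ)) := by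
      rw [hsymm]; exact hCc
    have hrowcol := conj_cross_zero hmono T hcross hb
    apply bandwidth_le
    intro p q hd
    rw [hassoc, hre]
    exact rot_conj_band hc' θ hM hrowcol.1 hrowcol.2 p q hd
  · rw [hassoc, hzero, rotC_zero]
    rw [show star (1 : Matrix (Fin n) (Fin n) ℂ) = 1 from star_one _, one_mul, mul_one]
    apply bandwidth_le
    intro p q hd
    exact hM p q (by omega)

lemma final_cross (hy : StrictMono y) (hyg : ∀ i, i + 1 ≤ y i)
    (hyn : ∀ i < m, y i ≤ n) (T : Matrix (Fin n) (Fin n) ℂ)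
    (hcross : ∀ j : Fin n, Cross y m (j : ℕ) → (∀ q, T j q = 0) ∧ (∀ p, T p j = 0))
    {r : Fin n} (hr : (r : ℕ) < m) :
    (∀ q, (Wt y m (NN y m) * T * star (Wt y m (NN y m))
        : Matrix (Fin n) (Fin n) ℂ) r q = 0) ∧
      (∀ p, (Wt y m (NN y m) * T * star (Wt y m (NN y m))
        : Matrix (Fin n) (Fin n) ℂ) p r = 0) := by
  obtain ⟨ε, hmono⟩ := Wt_mono (n := n) hyg hyn (NN y m) (le_refl _)
  have h1 := hyg (r : ℕ)
  have hF : FF y m (NN y m) (y (r : ℕ) - 1) = (r : ℕ) := FF_final hy hyg hr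
  have hsymm : (FF y m (NN y m)).symm ((r : ℕ)) = y (r : ℕ) - 1 := by
    rw [Equiv.symm_apply_eq]; exact hF.symm
  have hb : Cross y m ((FF y m (NN y m)).symm ((r : ℕ))) := by
    rw [hsymm]; exact ⟨(r : ℕ), hr, by omega⟩
  exact conj_cross_zero hmono T hcross hb

/-! ### topRight estimates -/

lemma topRight_mono_band (hy : StrictMono y) (hyg : ∀ i, i + 1 ≤ y i)
    {t : ℕ} (ht : t ≤ NN y m) {ε : ℕ → ℂ} {W : Matrix (Fin n) (Fin n) ℂ}
    (hmono : IsMono (FF y m t) ε W) {B : ℕ} (T : Matrix (Fin n) (Fin B) ℂ)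
    (hrows : ∀ j : Fin n, Cross y m (j : ℕ) → ∀ q, T j q = 0)
    (u v : Fin (n + B)) (hd : bandwidth (topRight T) ≤ Nat.dist (u : ℕ) (v : ℕ)) :
    topRight (W * T) u v = 0 := by
  rw [topRight, Matrix.of_apply]
  by_cases h : (u : ℕ) < n ∧ n ≤ (v : ℕ)
  · rw [dif_pos h]
    rw [hmono.mul_left T ⟨(u : ℕ), h.1⟩]
    set a : ℕ := (FF y m t).symm ((⟨(u : ℕ), h.1⟩ : Fin n) : ℕ) with ha
    by_cases hca : Cross y m a
    · rw [hrows _ hca]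
      ring
    · have hFa : FF y m t a = (u : ℕ) := (FF y m t).apply_symm_apply _
      have hge : a ≤ (u : ℕ) := by
        have := FF_ge hy hyg ht hca
        omega
      have haB : a < n + B := by omega
      have hz : topRight T ⟨a, haB⟩ v = 0 := by
        apply bandwidth_spec
        simp only [Nat.dist] at *
        omega
      rw [topRight, Matrix.of_apply, dif_pos (⟨by
          show (⟨a, haB⟩ : Fin (n + B)).1 < n
          exact hmono.symm_lt h.1, by
          show n ≤ (v : ℕ)
          exact h.2⟩ : ((⟨a, haB⟩ : Fin (n + B)) : ℕ) < n ∧ n ≤ (v : ℕ))] at hz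
      rw [hz]
      ring
  · rw [dif_neg h]

lemma topRight_rot_band {c r : ℕ} (hc : c + 1 < n) (θ : ℝ) {B : ℕ}
    {M : Matrix (Fin n) (Fin B) ℂ}
    (hM : ∀ u v : Fin (n + B), r ≤ Nat.dist (u : ℕ) (v : ℕ) → topRight M u v = 0)
    (hrow : ∀ q, M ⟨c+1, hc⟩ q = 0)
    (u v : Fin (n + B)) (hd : r ≤ Nat.dist (u : ℕ) (v : ℕ)) :
    topRight ((Rot ⟨c, by omega⟩ ⟨c+1, hc⟩ θ : Matrix (Fin n) (Fin n) ℂ) * M) u v = 0 := by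
  set A : Fin n := ⟨c, by omega⟩ with hA
  set Bf : Fin n := ⟨c+1, hc⟩ with hBf
  have hab : A ≠ Bf := finmk_ne hc
  rw [topRight, Matrix.of_apply]
  by_cases h : (u : ℕ) < n ∧ n ≤ (v : ℕ)
  · rw [dif_pos h]
    rw [rot_mul_apply hab]
    have hgen : ∀ (w : Fin n) (hw : (w : ℕ) ≤ (u : ℕ)), M w ⟨(v : ℕ) - n, by have := v.2; omega⟩ = 0 := by
      intro w hw
      have hwB : (w : ℕ) < n + B := by omega
      have hz : topRight M ⟨(w : ℕ), hwB⟩ v = 0 := by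
        apply hM
        simp only [Nat.dist] at *
        omega
      rw [topRight, Matrix.of_apply, dif_pos (⟨by
        show ((⟨(w : ℕ), hwB⟩ : Fin (n + B)) : ℕ) < n
        exact w.2, h.2⟩ : ((⟨(w : ℕ), hwB⟩ : Fin (n + B)) : ℕ) < n ∧ n ≤ (v : ℕ))] at hz
      convert hz using 2
    by_cases hpA : (⟨(u : ℕ), h.1⟩ : Fin n) = A
    · rw [if_pos hpA]
      have huc : (u : ℕ) = c := congrArg Fin.val hpA
      have hAv : (A : ℕ) = c := rfl
      rw [hgen A (by omega), hrow]
      ring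
    · by_cases hpB : (⟨(u : ℕ), h.1⟩ : Fin n) = Bf
      · rw [if_neg hpA, if_pos hpB]
        have huc : (u : ℕ) = c + 1 := congrArg Fin.val hpB
        have hAv : (A : ℕ) = c := rfl
        rw [hgen A (by omega), hrow]
        ring
      · rw [if_neg hpA, if_neg hpB]
        exact hgen _ (le_refl _)
  · rw [dif_neg h]

lemma topRight_band_full (hy : StrictMono y) (hyg : ∀ i, i + 1 ≤ y i)
    (hyn : ∀ i < m, y i ≤ n) {B : ℕ} (T : Matrix (Fin n) (Fin B) ℂ)
    (hrows : ∀ j : Fin n, Cross y m (j : ℕ) → ∀ q, T j q = 0)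
    {ξ : ℝ} (h0 : 0 ≤ ξ) (h1 : ξ ≤ 1) :
    bandwidth (topRight (Wfun y m ξ * T)) ≤ bandwidth (topRight T) := by
  obtain ⟨t, θ, htN, hor, he⟩ := Wfun_eval (y := y) (m := m) (n := n) h0 h1
  obtain ⟨ε, hmono⟩ := Wt_mono hyg hyn t htN
  have hM := topRight_mono_band hy hyg htN hmono T hrows
  have hassoc : Wfun y m ξ * T = (RotC (cs y m t) θ : Matrix (Fin n) (Fin n) ℂ)
      * ((Wt y m t : Matrix (Fin n) (Fin n) ℂ) * T) := by
    rw [he]; exact Matrix.mul_assoc _ _ _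
  rcases hor with hlt | hzero
  · obtain ⟨hkm, hcp, hc, hpy, hkp⟩ := step_facts (n := n) hyg hyn hlt
    have hc' : cs y m t + 1 < n := by omega
    have hre : (RotC (cs y m t) θ : Matrix (Fin n) (Fin n) ℂ)
        = Rot ⟨cs y m t, by omega⟩ ⟨cs y m t + 1, hc'⟩ θ := dif_pos hc'
    obtain ⟨hFc, hCc⟩ := FF_cross_pos (n := n) hy hyg hyn hlt
    have hsymm : (FF y m t).symm ((⟨cs y m t + 1, hc'⟩ : Fin n) : ℕ)
        = y (KK y m t) - 1 := by
      rw [Equiv.symm_apply_eq]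
      exact hFc.symm
    have hrowz : ∀ q, (Wt y m t * T : Matrix (Fin n) (Fin B) ℂ)
        (⟨cs y m t + 1, hc'⟩ : Fin n) q = 0 := by
      intro q
      erw [hmono.mul_left T]
      rw [hrows ⟨(FF y m t).symm ((⟨cs y m t + 1, hc'⟩ : Fin n) : ℕ), _⟩
        (by show Cross y m ((FF y m t).symm ((⟨cs y m t + 1, hc'⟩ : Fin n) : ℕ))
            rw [hsymm]; exact hCc)]
      ring
    apply bandwidth_le
    intro u v hd
    rw [hassoc, hre]
    exact topRight_rot_band hc' θ hM hrowz u v hd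
  · rw [hassoc, hzero, rotC_zero, Matrix.one_mul]
    exact bandwidth_le _ _ hM

/-! ### botLeft estimates -/

lemma botLeft_mono_band (hy : StrictMono y) (hyg : ∀ i, i + 1 ≤ y i)
    {t : ℕ} (ht : t ≤ NN y m) {ε : ℕ → ℂ} {W : Matrix (Fin n) (Fin n) ℂ}
    (hmono : IsMono (FF y m t) ε W) {B : ℕ} (T : Matrix (Fin B) (Fin n) ℂ)
    (hcols : ∀ j : Fin n, Cross y m (j : ℕ) → ∀ p, T p j = 0)
    (u v : Fin (n + B)) (hd : bandwidth (botLeft T) ≤ Nat.dist (u : ℕ) (v : ℕ)) :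
    botLeft (T * star W) u v = 0 := by
  rw [botLeft, Matrix.of_apply]
  by_cases h : n ≤ (u : ℕ) ∧ (v : ℕ) < n
  · rw [dif_pos h]
    rw [hmono.mul_star_right T _ ⟨(v : ℕ), h.2⟩]
    set a : ℕ := (FF y m t).symm ((⟨(v : ℕ), h.2⟩ : Fin n) : ℕ) with ha
    by_cases hca : Cross y m a
    · rw [hcols _ hca]
      ring
    · have hFa : FF y m t a = (v : ℕ) := (FF y m t).apply_symm_apply _
      have hge : a ≤ (v : ℕ) := by
        have := FF_ge hy hyg ht hca
        omega
      have haB : a < n + B := by omega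
      have hz : botLeft T u ⟨a, haB⟩ = 0 := by
        apply bandwidth_spec
        simp only [Nat.dist] at *
        omega
      rw [botLeft, Matrix.of_apply, dif_pos (⟨h.1, by
          show ((⟨a, haB⟩ : Fin (n + B)) : ℕ) < n
          exact hmono.symm_lt h.2⟩ : n ≤ (u : ℕ) ∧ ((⟨a, haB⟩ : Fin (n + B)) : ℕ) < n)] at hz
      rw [hz]
      ring
  · rw [dif_neg h]

lemma botLeft_rot_band {c r : ℕ} (hc : c + 1 < n) (θ : ℝ) {B : ℕ}
    {M : Matrix (Fin B) (Fin n) ℂ}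
    (hM : ∀ u v : Fin (n + B), r ≤ Nat.dist (u : ℕ) (v : ℕ) → botLeft M u v = 0)
    (hcol : ∀ p, M p ⟨c+1, hc⟩ = 0)
    (u v : Fin (n + B)) (hd : r ≤ Nat.dist (u : ℕ) (v : ℕ)) :
    botLeft (M * star (Rot ⟨c, by omega⟩ ⟨c+1, hc⟩ θ : Matrix (Fin n) (Fin n) ℂ)) u v = 0 := by
  set A : Fin n := ⟨c, by omega⟩ with hA
  set Bf : Fin n := ⟨c+1, hc⟩ with hBf
  have hab : A ≠ Bf := finmk_ne hc
  rw [botLeft, Matrix.of_apply]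
  by_cases h : n ≤ (u : ℕ) ∧ (v : ℕ) < n
  · rw [dif_pos h]
    rw [mul_rotstar_apply hab]
    have hgen : ∀ (w : Fin n) (hw : (w : ℕ) ≤ (v : ℕ)),
        M ⟨(u : ℕ) - n, by have := u.2; omega⟩ w = 0 := by
      intro w hw
      have hwB : (w : ℕ) < n + B := by omega
      have hz : botLeft M u ⟨(w : ℕ), hwB⟩ = 0 := by
        apply hM
        simp only [Nat.dist] at *
        omega
      rw [botLeft, Matrix.of_apply, dif_pos (⟨h.1, by
        show ((⟨(w : ℕ), hwB⟩ : Fin (n + B)) : ℕ) < n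
        exact w.2⟩ : n ≤ (u : ℕ) ∧ ((⟨(w : ℕ), hwB⟩ : Fin (n + B)) : ℕ) < n)] at hz
      convert hz using 2
    by_cases hqA : (⟨(v : ℕ), h.2⟩ : Fin n) = A
    · rw [if_pos hqA]
      have hvc : (v : ℕ) = c := congrArg Fin.val hqA
      have hAv : (A : ℕ) = c := rfl
      rw [hgen A (by omega), hcol]
      ring
    · by_cases hqB : (⟨(v : ℕ), h.2⟩ : Fin n) = Bf
      · rw [if_neg hqA, if_pos hqB]
        have hvc : (v : ℕ) = c + 1 := congrArg Fin.val hqB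
        have hAv : (A : ℕ) = c := rfl
        rw [hgen A (by omega), hcol]
        ring
      · rw [if_neg hqA, if_neg hqB]
        exact hgen _ (le_refl _)
  · rw [dif_neg h]

lemma botLeft_band_full (hy : StrictMono y) (hyg : ∀ i, i + 1 ≤ y i)
    (hyn : ∀ i < m, y i ≤ n) {B : ℕ} (T : Matrix (Fin B) (Fin n) ℂ)
    (hcols : ∀ j : Fin n, Cross y m (j : ℕ) → ∀ p, T p j = 0)
    {ξ : ℝ} (h0 : 0 ≤ ξ) (h1 : ξ ≤ 1) :
    bandwidth (botLeft (T * star (Wfun y m ξ))) ≤ bandwidth (botLeft T) := by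
  obtain ⟨t, θ, htN, hor, he⟩ := Wfun_eval (y := y) (m := m) (n := n) h0 h1
  obtain ⟨ε, hmono⟩ := Wt_mono hyg hyn t htN
  have hM := botLeft_mono_band hy hyg htN hmono T hcols
  have hassoc : T * star (Wfun y m ξ)
      = (T * star (Wt y m t : Matrix (Fin n) (Fin n) ℂ))
        * star (RotC (cs y m t) θ : Matrix (Fin n) (Fin n) ℂ) := by
    rw [he, Matrix.star_mul, Matrix.mul_assoc]; rfl
  rcases hor with hlt | hzero
  · obtain ⟨hkm, hcp, hc, hpy, hkp⟩ := step_facts (n := n) hyg hyn hlt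
    have hc' : cs y m t + 1 < n := by omega
    have hre : (RotC (cs y m t) θ : Matrix (Fin n) (Fin n) ℂ)
        = Rot ⟨cs y m t, by omega⟩ ⟨cs y m t + 1, hc'⟩ θ := dif_pos hc'
    obtain ⟨hFc, hCc⟩ := FF_cross_pos (n := n) hy hyg hyn hlt
    have hsymm : (FF y m t).symm ((⟨cs y m t + 1, hc'⟩ : Fin n) : ℕ)
        = y (KK y m t) - 1 := by
      rw [Equiv.symm_apply_eq]
      exact hFc.symm
    have hcolz : ∀ p, (T * star (Wt y m t) : Matrix (Fin B) (Fin n) ℂ)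
        p (⟨cs y m t + 1, hc'⟩ : Fin n) = 0 := by
      intro p
      erw [hmono.mul_star_right T]
      rw [hcols ⟨(FF y m t).symm ((⟨cs y m t + 1, hc'⟩ : Fin n) : ℕ), _⟩
        (by show Cross y m ((FF y m t).symm ((⟨cs y m t + 1, hc'⟩ : Fin n) : ℕ))
            rw [hsymm]; exact hCc)]
      ring
    apply bandwidth_le
    intro u v hd
    rw [hassoc, hre]
    exact botLeft_rot_band hc' θ hM hcolz u v hd
  · rw [hassoc, hzero, rotC_zero]
    rw [show star (1 : Matrix (Fin n) (Fin n) ℂ) = 1 from star_one _, Matrix.mul_one]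
    exact bandwidth_le _ _ hM


lemma final_rows (hy : StrictMono y) (hyg : ∀ i, i + 1 ≤ y i)
    (hyn : ∀ i < m, y i ≤ n) {B : ℕ} (T : Matrix (Fin n) (Fin B) ℂ)
    (hrows : ∀ j : Fin n, Cross y m (j : ℕ) → ∀ q, T j q = 0)
    {p : Fin n} (hp : (p : ℕ) < m) (q : Fin B) :
    (Wt y m (NN y m) * T : Matrix (Fin n) (Fin B) ℂ) p q = 0 := by
  obtain ⟨ε, hmono⟩ := Wt_mono (n := n) hyg hyn (NN y m) (le_refl _)
  have h1 := hyg (p : ℕ)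
  have hF : FF y m (NN y m) (y (p : ℕ) - 1) = (p : ℕ) := FF_final hy hyg hp
  have hsymm : (FF y m (NN y m)).symm ((p : ℕ)) = y (p : ℕ) - 1 := by
    rw [Equiv.symm_apply_eq]; exact hF.symm
  erw [hmono.mul_left T p q]
  rw [hrows ⟨(FF y m (NN y m)).symm ((p : ℕ)), _⟩
    (by show Cross y m ((FF y m (NN y m)).symm ((p : ℕ)))
        rw [hsymm]; exact ⟨(p : ℕ), hp, by omega⟩)]
  ring

lemma final_cols (hy : StrictMono y) (hyg : ∀ i, i + 1 ≤ y i)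
    (hyn : ∀ i < m, y i ≤ n) {B : ℕ} (T : Matrix (Fin B) (Fin n) ℂ)
    (hcols : ∀ j : Fin n, Cross y m (j : ℕ) → ∀ p, T p j = 0)
    {q : Fin n} (hq : (q : ℕ) < m) (p : Fin B) :
    (T * star (Wt y m (NN y m)) : Matrix (Fin B) (Fin n) ℂ) p q = 0 := by
  obtain ⟨ε, hmono⟩ := Wt_mono (n := n) hyg hyn (NN y m) (le_refl _)
  have h1 := hyg (q : ℕ)
  have hF : FF y m (NN y m) (y (q : ℕ) - 1) = (q : ℕ) := FF_final hy hyg hq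
  have hsymm : (FF y m (NN y m)).symm ((q : ℕ)) = y (q : ℕ) - 1 := by
    rw [Equiv.symm_apply_eq]; exact hF.symm
  erw [hmono.mul_star_right T p q]
  rw [hcols ⟨(FF y m (NN y m)).symm ((q : ℕ)), _⟩
    (by show Cross y m ((FF y m (NN y m)).symm ((q : ℕ)))
        rw [hsymm]; exact ⟨(q : ℕ), hq, by omega⟩)]
  ring

end Main
end S12

theorem stmt_12 (n : ℕ) (hn : 1 ≤ n) (m : ℕ) (z : Fin m → ℕ)
    (hz : StrictMono z) (hz1 : ∀ k, 1 ≤ z k) (hzn : ∀ k, z k ≤ n) :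
    ∃ W : C(Set.Icc (0 : ℝ) 1, Matrix (Fin n) (Fin n) ℂ),
      (∀ ξ, W ξ ∈ Matrix.unitaryGroup (Fin n) ℂ) ∧
      W ⟨0, by norm_num⟩ = 1 ∧
      (∀ T : Matrix (Fin n) (Fin n) ℂ,
        (∀ k : Fin m, hasZeroCross T ⟨z k - 1, by have := hz1 k; have := hzn k; omega⟩) →
          ((∀ r : Fin n, (r : ℕ) < m →
              hasZeroCross (W ⟨1, by norm_num⟩ * T * star (W ⟨1, by norm_num⟩)) r) ∧
           (∀ ξ, bandwidth (W ξ * T * star (W ξ)) ≤ bandwidth T + 2))) ∧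
      (∀ b : ℕ, 1 ≤ b → ∀ T : Matrix (Fin n) (Fin b) ℂ,
        (∀ (k : Fin m) (q : Fin b),
            T ⟨z k - 1, by have := hz1 k; have := hzn k; omega⟩ q = 0) →
          ((∀ (p : Fin n) (q : Fin b), (p : ℕ) < m → (W ⟨1, by norm_num⟩ * T) p q = 0) ∧
           (∀ ξ, bandwidth (topRight (W ξ * T)) ≤ bandwidth (topRight T)))) ∧
      (∀ b : ℕ, 1 ≤ b → ∀ T : Matrix (Fin b) (Fin n) ℂ,
        (∀ (k : Fin m) (p : Fin b),
            T p ⟨z k - 1, by have := hz1 k; have := hzn k; omega⟩ = 0) →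
          ((∀ (p : Fin b) (q : Fin n), (q : ℕ) < m →
              (T * star (W ⟨1, by norm_num⟩)) p q = 0) ∧
           (∀ ξ, bandwidth (botLeft (T * star (W ξ))) ≤ bandwidth (botLeft T)))) := by
  classical
  set y : ℕ → ℕ := fun k => if h : k < m then z ⟨k, h⟩ else n + 1 + k with hydef
  have hyval : ∀ (k : ℕ) (h : k < m), y k = z ⟨k, h⟩ := fun k h => dif_pos h
  have hzge : ∀ (k : ℕ) (h : k < m), k + 1 ≤ z ⟨k, h⟩ := by
    intro k
    induction k with
    | zero => intro h; exact hz1 ⟨0, h⟩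
    | succ k ih =>
      intro h
      have h1 := ih (by omega)
      have h2 : z ⟨k, by omega⟩ < z ⟨k+1, h⟩ := hz (by rw [Fin.mk_lt_mk]; omega)
      omega
  have hy : StrictMono y := by
    intro a b hab
    by_cases hb : b < m
    · have ha : a < m := by omega
      rw [hydef]
      simp only []
      rw [dif_pos ha, dif_pos hb]
      exact hz (by rw [Fin.mk_lt_mk]; omega)
    · rw [hydef]
      simp only []
      rw [dif_neg hb]
      by_cases ha : a < m
      · rw [dif_pos ha]
        have := hzn ⟨a, ha⟩
        omega
      · rw [dif_neg ha]
        omega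
  have hyg : ∀ i, i + 1 ≤ y i := by
    intro i
    by_cases h : i < m
    · rw [hydef]; simp only []; rw [dif_pos h]; exact hzge i h
    · rw [hydef]; simp only []; rw [dif_neg h]; omega
  have hyn : ∀ i < m, y i ≤ n := by
    intro i h
    rw [hydef]; simp only []; rw [dif_pos h]; exact hzn ⟨i, h⟩
  refine ⟨⟨fun ξ => S12.Wfun y m ξ.1, S12.Wfun_cont.comp continuous_subtype_val⟩,
    ?_, ?_, ?_, ?_, ?_⟩
  · intro ξ
    obtain ⟨h0, h1⟩ := Set.mem_Icc.mp ξ.2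
    exact S12.Wfun_unitary h0 h1
  · show S12.Wfun y m ((0 : ℝ)) = 1
    exact S12.Wfun_zeroξ
  · intro T hT
    have hcross : ∀ j : Fin n, S12.Cross y m (j : ℕ) →
        (∀ q, T j q = 0) ∧ (∀ p, T p j = 0) := by
      rintro j ⟨i, him, hij⟩
      have hval := hyval i him
      have hge := hzge i him
      have hje : (⟨z ⟨i, him⟩ - 1, by have := hzn ⟨i, him⟩; omega⟩ : Fin n) = j :=
        Fin.ext (by simp only []; omega)
      have := hT ⟨i, him⟩
      rw [hje] at this
      exact this
    constructor
    · intro r hr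
      show hasZeroCross (S12.Wfun y m ((1:ℝ)) * T * star (S12.Wfun y m ((1:ℝ)))) r
      rw [S12.Wfun_oneξ]
      exact S12.final_cross hy hyg hyn T hcross hr
    · intro ξ
      obtain ⟨h0, h1⟩ := Set.mem_Icc.mp ξ.2
      exact S12.conj_band_full hy hyg hyn T hcross h0 h1
  · intro b hb T hT
    have hrows : ∀ j : Fin n, S12.Cross y m (j : ℕ) → ∀ q, T j q = 0 := by
      rintro j ⟨i, him, hij⟩ q
      have hval := hyval i him
      have hge := hzge i him
      have hje : (⟨z ⟨i, him⟩ - 1, by have := hzn ⟨i, him⟩; omega⟩ : Fin n) = j :=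
        Fin.ext (by simp only []; omega)
      have := hT ⟨i, him⟩ q
      rw [hje] at this
      exact this
    constructor
    · intro p q hp
      show ((S12.Wfun y m ((1:ℝ)) : Matrix (Fin n) (Fin n) ℂ) * T
        : Matrix (Fin n) (Fin b) ℂ) p q = 0
      rw [S12.Wfun_oneξ]
      exact S12.final_rows hy hyg hyn T hrows hp q
    · intro ξ
      obtain ⟨h0, h1⟩ := Set.mem_Icc.mp ξ.2
      exact S12.topRight_band_full hy hyg hyn T hrows h0 h1
  · intro b hb T hT
    have hcols : ∀ j : Fin n, S12.Cross y m (j : ℕ) → ∀ p, T p j = 0 := by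
      rintro j ⟨i, him, hij⟩ p
      have hval := hyval i him
      have hge := hzge i him
      have hje : (⟨z ⟨i, him⟩ - 1, by have := hzn ⟨i, him⟩; omega⟩ : Fin n) = j :=
        Fin.ext (by simp only []; omega)
      have := hT ⟨i, him⟩ p
      rw [hje] at this
      exact this
    constructor
    · intro p q hq
      show (T * star (S12.Wfun y m ((1:ℝ)) : Matrix (Fin n) (Fin n) ℂ)
        : Matrix (Fin b) (Fin n) ℂ) p q = 0
      rw [S12.Wfun_oneξ]
      exact S12.final_cols hy hyg hyn T hcols hq p
    · intro ξ
      obtain ⟨h0, h1⟩ := Set.mem_Icc.mp ξ.2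
      exact S12.botLeft_band_full hy hyg hyn T hcols h0 h1
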